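/- arXiv:1806.06266 — 6 statements merged into one kernel-verified Lean document; each statement's English description precedes it below -/
import Mathlib

section
/- Let I_1 = { floor(n/n_1), floor(2n/n_1), ..., floor(n_1 · n/n_1) } and I_2 = { g(n/n_2), g(2n/n_2), ..., g(n_2 · n/n_2) }, where g(x) = ceil(x) - 1 is the largest integer strictly smaller than x. If n_1, n_2 are positive integers with n_1 + n_2 = n, then I_1 and I_2 are disjoint and their union is {1, 2, ..., n}. -/
lemma floor_char (a b : ℕ) (m : ℤ) (hb : 0 < b) :
    ⌊((a : ℚ)) / (b : ℚ)⌋ = m ↔ m * b ≤ (a : ℤ) ∧ (a : ℤ) < (m + 1) * b := by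
  have hb' : (0:ℚ) < (b:ℚ) := by exact_mod_cast hb
  rw [Int.floor_eq_iff, le_div_iff₀ hb', div_lt_iff₀ hb']
  constructor
  · rintro ⟨h1, h2⟩
    constructor
    · exact_mod_cast h1
    · have : (a:ℚ) < ((m+1:ℤ):ℚ) * ((b:ℤ):ℚ) := by push_cast; push_cast at h2; linarith
      exact_mod_cast this
  · rintro ⟨h1, h2⟩
    constructor
    · exact_mod_cast h1
    · have : ((a:ℤ):ℚ) < ((m+1:ℤ):ℚ) * ((b:ℤ):ℚ) := by exact_mod_cast h2
      push_cast at this ⊢; linarith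

lemma ceil_char (a b : ℕ) (m : ℤ) (hb : 0 < b) :
    ⌈((a : ℚ)) / (b : ℚ)⌉ - 1 = m ↔ m * b < (a : ℤ) ∧ (a : ℤ) ≤ (m + 1) * b := by
  have hb' : (0:ℚ) < (b:ℚ) := by exact_mod_cast hb
  rw [sub_eq_iff_eq_add, Int.ceil_eq_iff, lt_div_iff₀ hb', div_le_iff₀ hb']
  constructor
  · rintro ⟨h1, h2⟩
    constructor
    · have : ((m:ℤ):ℚ) * ((b:ℤ):ℚ) < (a:ℚ) := by push_cast; push_cast at h1; linarith
      exact_mod_cast this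
    · have : (a:ℚ) ≤ ((m+1:ℤ):ℚ) * ((b:ℤ):ℚ) := by push_cast; push_cast at h2; linarith
      exact_mod_cast this
  · rintro ⟨h1, h2⟩
    constructor
    · have : ((m:ℤ):ℚ) * ((b:ℤ):ℚ) < ((a:ℤ):ℚ) := by exact_mod_cast h1
      push_cast at this ⊢; linarith
    · have : ((a:ℤ):ℚ) ≤ ((m+1:ℤ):ℚ) * ((b:ℤ):ℚ) := by exact_mod_cast h2
      push_cast at this ⊢; linarith

theorem interleaving_slots (n n₁ n₂ : ℕ) (hn₁ : 0 < n₁) (hn₂ : 0 < n₂)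
    (hsum : n₁ + n₂ = n) :
    let I₁ : Finset ℤ :=
      (Finset.Icc 1 n₁).image (fun k => ⌊((k * n : ℕ) : ℚ) / (n₁ : ℚ)⌋)
    let I₂ : Finset ℤ :=
      (Finset.Icc 1 n₂).image (fun k => ⌈((k * n : ℕ) : ℚ) / (n₂ : ℚ)⌉ - 1)
    Disjoint I₁ I₂ ∧ I₁ ∪ I₂ = Finset.Icc (1 : ℤ) (n : ℤ) := by
  intro I₁ I₂
  have hn₁' : (0:ℤ) < (n₁:ℤ) := by exact_mod_cast hn₁
  have hn₂' : (0:ℤ) < (n₂:ℤ) := by exact_mod_cast hn₂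
  have hn : 0 < n := by omega
  have hN : (0:ℤ) < (n:ℤ) := by exact_mod_cast hn
  have hsum' : (n₁:ℤ) + (n₂:ℤ) = (n:ℤ) := by exact_mod_cast hsum
  -- cancellation helpers
  have hlt : ∀ a b : ℤ, a * n < b * n → a < b := fun a b h =>
    lt_of_mul_lt_mul_right h (le_of_lt hN)
  -- membership characterizations
  have mem1 : ∀ m : ℤ, m ∈ I₁ ↔
      ∃ k : ℕ, 1 ≤ k ∧ k ≤ n₁ ∧ m * n₁ ≤ (k:ℤ) * n ∧ (k:ℤ) * n < (m+1) * n₁ := by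
    intro m
    simp only [I₁, Finset.mem_image, Finset.mem_Icc]
    constructor
    · rintro ⟨k, ⟨hk1, hk2⟩, hk⟩
      rw [floor_char _ _ _ hn₁] at hk
      refine ⟨k, hk1, hk2, ?_, ?_⟩
      · have := hk.1; push_cast at this ⊢; linarith
      · have := hk.2; push_cast at this ⊢; linarith
    · rintro ⟨k, hk1, hk2, h1, h2⟩
      refine ⟨k, ⟨hk1, hk2⟩, ?_⟩
      rw [floor_char _ _ _ hn₁]
      constructor
      · push_cast; push_cast at h1; linarith
      · push_cast; push_cast at h2; linarith
  have mem2 : ∀ m : ℤ, m ∈ I₂ ↔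
      ∃ k : ℕ, 1 ≤ k ∧ k ≤ n₂ ∧ m * n₂ < (k:ℤ) * n ∧ (k:ℤ) * n ≤ (m+1) * n₂ := by
    intro m
    simp only [I₂, Finset.mem_image, Finset.mem_Icc]
    constructor
    · rintro ⟨k, ⟨hk1, hk2⟩, hk⟩
      rw [ceil_char _ _ _ hn₂] at hk
      refine ⟨k, hk1, hk2, ?_, ?_⟩
      · have := hk.1; push_cast at this ⊢; linarith
      · have := hk.2; push_cast at this ⊢; linarith
    · rintro ⟨k, hk1, hk2, h1, h2⟩
      refine ⟨k, ⟨hk1, hk2⟩, ?_⟩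
      rw [ceil_char _ _ _ hn₂]
      constructor
      · push_cast; push_cast at h1; linarith
      · push_cast; push_cast at h2; linarith
  constructor
  · -- disjoint
    rw [Finset.disjoint_left]
    intro m hm1 hm2
    obtain ⟨k₁, _, _, h11, h12⟩ := (mem1 m).mp hm1
    obtain ⟨k₂, _, _, h21, h22⟩ := (mem2 m).mp hm2
    have e1 : m * (n:ℤ) = m * n₁ + m * n₂ := by rw [← hsum']; ring
    have e2 : (m+1) * (n:ℤ) = (m+1) * n₁ + (m+1) * n₂ := by rw [← hsum']; ring
    have e3 : ((k₁:ℤ) + k₂) * n = (k₁:ℤ) * n + (k₂:ℤ) * n := by ring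
    have hA : m < (k₁:ℤ) + k₂ := hlt _ _ (by linarith)
    have hB : (k₁:ℤ) + k₂ < m + 1 := hlt _ _ (by linarith)
    omega
  · -- union
    ext m
    simp only [Finset.mem_union, Finset.mem_Icc]
    constructor
    · rintro (hm | hm)
      · obtain ⟨k, hk1, hk2, h1, h2⟩ := (mem1 m).mp hm
        have hk1' : (1:ℤ) ≤ k := by exact_mod_cast hk1
        have hk2' : (k:ℤ) ≤ n₁ := by exact_mod_cast hk2
        constructor
        · have : (1:ℤ) * n₁ < (m+1) * n₁ := by nlinarith
          have := lt_of_mul_lt_mul_right this (le_of_lt hn₁')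
          omega
        · have : m * n₁ ≤ (n:ℤ) * n₁ := by nlinarith
          exact le_of_mul_le_mul_right this hn₁'
      · obtain ⟨k, hk1, hk2, h1, h2⟩ := (mem2 m).mp hm
        have hk1' : (1:ℤ) ≤ k := by exact_mod_cast hk1
        have hk2' : (k:ℤ) ≤ n₂ := by exact_mod_cast hk2
        constructor
        · have : (1:ℤ) * n₂ < (m+1) * n₂ := by nlinarith
          have := lt_of_mul_lt_mul_right this (le_of_lt hn₂')
          omega
        · have : m * n₂ ≤ (n:ℤ) * n₂ := by nlinarith
          exact le_of_mul_le_mul_right this hn₂'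
    · rintro ⟨hm1, hm2⟩
      set q : ℤ := m * n₂ / n with hq
      set r : ℤ := m * n₂ % n with hr
      have hr0 : 0 ≤ r := Int.emod_nonneg _ (ne_of_gt hN)
      have hrn : r < n := Int.emod_lt_of_pos _ hN
      have heq : (n:ℤ) * q + r = m * n₂ := by
        rw [hq, hr]; exact Int.mul_ediv_add_emod _ _
      by_cases hcase : r < n₁
      · left
        rw [mem1 m]
        have key : (m - q) * (n:ℤ) = m * n₁ + r := by
          have : m * (n:ℤ) = m * n₁ + m * n₂ := by rw [← hsum']; ring
          nlinarith [heq]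
        have hpos : 0 < m - q := by
          have h0 : (0:ℤ) * n < (m - q) * n := by nlinarith
          exact hlt 0 _ h0
        have hle : m - q ≤ n₁ := by
          have : (m - q) * (n:ℤ) < ((n₁:ℤ) + 1) * n := by nlinarith
          have := hlt _ _ this
          omega
        refine ⟨(m - q).toNat, by omega, by omega, ?_, ?_⟩
        · rw [Int.toNat_of_nonneg (by omega)]; linarith
        · rw [Int.toNat_of_nonneg (by omega)]; linarith
      · right
        rw [mem2 m]
        have hq0 : 0 ≤ q := Int.ediv_nonneg (by positivity) (le_of_lt hN)
        have key : (q + 1) * (n:ℤ) = m * n₂ + (n - r) := by linarith [heq]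
        have hle : q + 1 ≤ n₂ := by
          have : (q + 1) * (n:ℤ) < ((n₂:ℤ) + 1) * n := by nlinarith
          have := hlt _ _ this
          omega
        refine ⟨(q + 1).toNat, by omega, by omega, ?_, ?_⟩
        · rw [Int.toNat_of_nonneg (by omega)]; linarith
        · rw [Int.toNat_of_nonneg (by omega)]
          have : (n:ℤ) - r ≤ n₂ := by omega
          linarith
end

section
/- Suppose the paper-review assignment is such that the review-relation graph H contains a cycle of length at least 3 with the property that no single reviewer reviews all papers on the cycle. Then there is no aggregation rule f such that (M, f) is pairwise unanimous. Concretely: there exists a valid profile of reviewer rankings under which pairwise unanimity forces the output ranking to contain a directed cycle among the papers, a contradiction. -/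
/-- A profile: each reviewer `i` submits a ranking of the papers in her review
set `P i`, encoded as a position function injective on `P i`. -/
def Profile (m n : ℕ) (P : Fin m → Finset (Fin n)) :=
  ∀ i : Fin m, {r : Fin n → ℕ // Set.InjOn r ↑(P i)}

/-- Pairwise unanimity. -/
def PairwiseUnanimous {m n : ℕ} (P : Fin m → Finset (Fin n))
    (f : Profile m n P → Equiv.Perm (Fin n)) : Prop :=
  ∀ (π : Profile m n P) (p q : Fin n),
    (∃ i, p ∈ P i ∧ q ∈ P i) →
    (∀ i, p ∈ P i → q ∈ P i → (π i).1 p < (π i).1 q) →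
    f π p < f π q

private lemma cyc_mod_val {L t a : ℕ} (ht : t < L) (ha : a < L) :
    (a + L - t) % L = if t ≤ a then a - t else a + L - t := by
  split_ifs with h
  · have : a + L - t = (a - t) + L := by omega
    rw [this, Nat.add_mod_right, Nat.mod_eq_of_lt (by omega)]
  · exact Nat.mod_eq_of_lt (by omega)

/-- if the review-relation graph contains a cycle
`c 0, c 1, …, c (L-1)` of length `L ≥ 3` (consecutive papers, cyclically, are
co-reviewed by some reviewer) such that no single reviewer reviews all the
papers on the cycle, then no aggregation rule is pairwise unanimous. -/
theorem no_pu_with_uncovered_cycle {m n : ℕ} (P : Fin m → Finset (Fin n))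
    (L : ℕ) (hL : 3 ≤ L) (c : Fin L → Fin n) (hcinj : Function.Injective c)
    (hadj : ∀ k : Fin L,
      ∃ i, c k ∈ P i ∧ c ⟨((k : ℕ) + 1) % L, Nat.mod_lt _ (by omega)⟩ ∈ P i)
    (hcover : ∀ i : Fin m, ∃ k : Fin L, c k ∉ P i) :
    ∀ f : Profile m n P → Equiv.Perm (Fin n), ¬ PairwiseUnanimous P f := by
  classical
  intro f hpu
  choose kk hkk using hcover
  -- the ranking of reviewer i
  set r : Fin m → Fin n → ℕ := fun i p =>
    if h : ∃ j : Fin L, c j = p then ((h.choose : ℕ) + L - (kk i : ℕ)) % L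
    else L + p.val with hr
  have hr_cycle : ∀ i (j : Fin L), r i (c j) = ((j : ℕ) + L - (kk i : ℕ)) % L := by
    intro i j
    have h : ∃ j' : Fin L, c j' = c j := ⟨j, rfl⟩
    simp only [hr, dif_pos h]
    rw [hcinj h.choose_spec]
  have hr_lt : ∀ i p, (∃ j : Fin L, c j = p) → r i p < L := by
    intro i p hp
    have := hr_cycle i hp.choose
    rw [hp.choose_spec] at this
    rw [this]
    exact Nat.mod_lt _ (by omega)
  have hr_ge : ∀ i p, (¬ ∃ j : Fin L, c j = p) → r i p = L + p.val := by
    intro i p hp; simp only [hr, dif_neg hp]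
  have hinj : ∀ i, Set.InjOn (r i) ↑(P i) := by
    intro i p hp q hq hpq
    by_cases hp : ∃ j : Fin L, c j = p <;> by_cases hq : ∃ j : Fin L, c j = q
    · obtain ⟨jp, hjp⟩ := hp; obtain ⟨jq, hjq⟩ := hq
      subst hjp; subst hjq
      rw [hr_cycle, hr_cycle] at hpq
      have h1 := cyc_mod_val (t := (kk i : ℕ)) (kk i).isLt jp.isLt
      have h2 := cyc_mod_val (t := (kk i : ℕ)) (kk i).isLt jq.isLt
      rw [h1, h2] at hpq
      have : (jp : ℕ) = (jq : ℕ) := by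
        have hjp := jp.isLt; have hjq := jq.isLt; have := (kk i).isLt
        split_ifs at hpq <;> omega
      exact congrArg c (Fin.ext this)
    · have := hr_lt i p ⟨hp.choose, hp.choose_spec⟩
      rw [hr_ge i q hq] at hpq; omega
    · have := hr_lt i q ⟨hq.choose, hq.choose_spec⟩
      rw [hr_ge i p hp] at hpq; omega
    · rw [hr_ge i p hp, hr_ge i q hq] at hpq
      exact Fin.ext (by omega)
  set π : Profile m n P := fun i => ⟨r i, hinj i⟩ with hπ
  -- each consecutive pair on the cycle is forced
  have hstep : ∀ k : Fin L,
      f π (c k) < f π (c ⟨((k : ℕ) + 1) % L, Nat.mod_lt _ (by omega)⟩) := by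
    intro k
    apply hpu π (c k) (c ⟨((k : ℕ) + 1) % L, Nat.mod_lt _ (by omega)⟩) (hadj k)
    intro i hpk hpk'
    show r i (c k) < r i (c ⟨((k : ℕ) + 1) % L, Nat.mod_lt _ (by omega)⟩)
    rw [hr_cycle, hr_cycle]
    have hki : ((k : ℕ) + 1) % L ≠ (kk i : ℕ) := by
      intro h
      apply hkk i
      have : kk i = ⟨((k : ℕ) + 1) % L, Nat.mod_lt _ (by omega)⟩ := Fin.ext h.symm
      rw [this]; exact hpk'
    have ht := (kk i).isLt
    have hk1 : (k : ℕ) < L := k.isLt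
    have hk2 : ((k : ℕ) + 1) % L < L := Nat.mod_lt _ (by omega)
    rw [cyc_mod_val ht hk1, cyc_mod_val ht hk2]
    rcases Nat.lt_or_ge ((k : ℕ) + 1) L with h | h
    · rw [Nat.mod_eq_of_lt h] at hki ⊢
      split_ifs <;> omega
    · have hkL : (k : ℕ) = L - 1 := by omega
      have h0 : ((k : ℕ) + 1) % L = 0 := by
        have : (k : ℕ) + 1 = L := by omega
        rw [this, Nat.mod_self]
      rw [h0] at hki ⊢
      split_ifs <;> omega
  -- derive contradiction from the cycle
  have mono : ∀ k : ℕ, (h : k < L) → f π (c ⟨0, by omega⟩) ≤ f π (c ⟨k, h⟩) := by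
    intro k
    induction k with
    | zero => intro h; exact le_refl _
    | succ k ih =>
      intro h
      have hk : k < L := by omega
      have hs := hstep ⟨k, hk⟩
      have he : (⟨(((⟨k, hk⟩ : Fin L) : ℕ) + 1) % L, Nat.mod_lt _ (by omega)⟩ : Fin L)
          = ⟨k + 1, h⟩ := Fin.ext (by simp [Nat.mod_eq_of_lt h])
      rw [he] at hs
      exact le_of_lt (lt_of_le_of_lt (ih hk) hs)
  have hlast := hstep ⟨L - 1, by omega⟩
  have he0 : (⟨(((⟨L - 1, by omega⟩ : Fin L) : ℕ) + 1) % L, Nat.mod_lt _ (by omega)⟩ : Fin L)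
      = ⟨0, by omega⟩ := by
    apply Fin.ext
    show ((L - 1) + 1) % L = 0
    have : (L - 1) + 1 = L := by omega
    rw [this, Nat.mod_self]
  rw [he0] at hlast
  exact absurd (mono (L - 1) (by omega)) (not_le_of_gt hlast)
end

section
/- Suppose every reviewer reviews exactly μ ≥ 3 papers, and (M, f) is pairwise unanimous. Then for any two reviewers i_1, i_2, the number of papers reviewed by both satisfies |P_{i_1} ∩ P_{i_2}| ∈ {0, 1, μ}. Equivalently, if two reviewers share at least two papers, they review exactly the same set of papers. -/
/-- Key arithmetic helper: shifting indices cyclically so that position `t`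
comes last, any step `a → a+1` with `a ≠ t` is increasing. -/
lemma cyc_step_lt {L a t : ℕ} (ha : a < L) (htl : t < L) (hne : a ≠ t) :
    (a + (L - 1 - t)) % L < (a + 1 + (L - 1 - t)) % L := by
  have hL0 : 0 < L := by omega
  have hA : (a + (L - 1 - t)) % L < L := Nat.mod_lt _ hL0
  have hAne : (a + (L - 1 - t)) % L ≠ L - 1 := by
    intro h
    have hd := Nat.div_add_mod (a + (L - 1 - t)) L
    have h2 : (a + (L - 1 - t)) / L < 2 := Nat.div_lt_of_lt_mul (by omega)
    have h4 : (a + (L - 1 - t)) / L = 0 ∨ (a + (L - 1 - t)) / L = 1 := by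
      rcases Nat.lt_or_ge ((a + (L - 1 - t)) / L) 1 with h' | h'
      · exact Or.inl (Nat.lt_one_iff.mp h')
      · exact Or.inr (Nat.le_antisymm (Nat.lt_succ_iff.mp h2) h')
    rcases h4 with h3 | h3 <;> rw [h3] at hd <;>
      simp only [Nat.mul_zero, Nat.mul_one] at hd <;> omega
  have hB : (a + 1 + (L - 1 - t)) % L = ((a + (L - 1 - t)) % L + 1) % L := by
    rw [Nat.mod_add_mod, Nat.add_right_comm]
  rw [hB, Nat.mod_eq_of_lt (show (a + (L - 1 - t)) % L + 1 < L by omega)]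
  omega

/-- if every reviewer reviews exactly `μ ≥ 3` papers and `(M,f)`
is pairwise unanimous, then any two reviewers review either `0`, `1` or `μ`
papers in common (in the last case, the same set of papers). -/
theorem pu_intersection_sizes {m n μ : ℕ} (hμ : 3 ≤ μ)
    (P : Fin m → Finset (Fin n)) (hcard : ∀ i, (P i).card = μ)
    (f : Profile m n P → Equiv.Perm (Fin n))
    (hpu : PairwiseUnanimous P f) :
    ∀ i₁ i₂ : Fin m, (P i₁ ∩ P i₂).card ∈ ({0, 1, μ} : Set ℕ) := by
  intro i₁ i₂
  by_contra hk
  simp only [Set.mem_insert_iff, Set.mem_singleton_iff, not_or] at hk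
  obtain ⟨h0, h1, hM⟩ := hk
  have hle : (P i₁ ∩ P i₂).card ≤ μ := by
    have := Finset.card_le_card (Finset.inter_subset_left : P i₁ ∩ P i₂ ⊆ P i₁)
    rwa [hcard] at this
  have h2 : 2 ≤ (P i₁ ∩ P i₂).card := by omega
  have hlt : (P i₁ ∩ P i₂).card < μ := by omega
  -- a paper reviewed by i₂ but not i₁
  obtain ⟨p₂, hp₂1, hp₂2⟩ : ∃ p, p ∈ P i₂ ∧ p ∉ P i₁ := by
    by_contra h
    push_neg at h
    have hsub : P i₂ ⊆ P i₁ ∩ P i₂ := fun x hx => Finset.mem_inter.mpr ⟨h x hx, hx⟩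
    have := Finset.card_le_card hsub
    rw [hcard] at this; omega
  -- two distinct papers reviewed by both
  obtain ⟨p₃, hp₃, p₄, hp₄, hne34⟩ := Finset.one_lt_card.mp (by omega : 1 < (P i₁ ∩ P i₂).card)
  have hp₃1 : p₃ ∈ P i₁ := (Finset.mem_inter.mp hp₃).1
  have hp₃2 : p₃ ∈ P i₂ := (Finset.mem_inter.mp hp₃).2
  have hp₄1 : p₄ ∈ P i₁ := (Finset.mem_inter.mp hp₄).1
  have hp₄2 : p₄ ∈ P i₂ := (Finset.mem_inter.mp hp₄).2
  classical
  -- the cycle as a list of length L = μ + 1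
  set L := μ + 1 with hLdef
  have hL0 : 0 < L := by omega
  set T := P i₁ \ {p₃, p₄} with hT
  have hTsub : ∀ x ∈ T, x ∈ P i₁ := fun x hx => (Finset.mem_sdiff.mp hx).1
  have hTcard : T.card = μ - 2 := by
    rw [hT, Finset.card_sdiff_of_subset (by
      intro x hx
      simp only [Finset.mem_insert, Finset.mem_singleton] at hx
      rcases hx with rfl | rfl <;> assumption), hcard]
    rw [Finset.card_insert_of_notMem (by simpa using hne34), Finset.card_singleton]
  set l : List (Fin n) := p₃ :: p₂ :: p₄ :: T.toList with hl
  have hlen : l.length = L := by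
    simp only [hl, List.length_cons, Finset.length_toList, hTcard]
    omega
  have hnd : l.Nodup := by
    have hp₃T : p₃ ∉ T := by simp [hT]
    have hp₄T : p₄ ∉ T := by simp [hT]
    have hp₂T : p₂ ∉ T := fun h => hp₂2 (hTsub _ h)
    have hne32 : p₃ ≠ p₂ := fun h => hp₂2 (h ▸ hp₃1)
    have hne42 : p₂ ≠ p₄ := fun h => hp₂2 (h ▸ hp₄1)
    simp only [hl, List.nodup_cons, List.mem_cons, Finset.mem_toList]
    refine ⟨?_, ?_, ?_, Finset.nodup_toList T⟩
    · push_neg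
      exact ⟨hne32, hne34, hp₃T⟩
    · push_neg
      exact ⟨hne42, hp₂T⟩
    · exact hp₄T
  -- elements at index ≠ 1 belong to P i₁
  have hget1 : ∀ (b : ℕ) (hb : b < l.length), b ≠ 1 → l.get ⟨b, hb⟩ ∈ P i₁ := by
    intro b hb hb1
    match b with
    | 0 => exact hp₃1
    | 1 => exact absurd rfl hb1
    | 2 => exact hp₄1
    | (b + 3) =>
      have : l.get ⟨b + 3, hb⟩ ∈ T.toList := by
        have : l.get ⟨b + 3, hb⟩ = T.toList.get ⟨b, by
          simp only [hl, List.length_cons] at hb; omega⟩ := rfl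
        rw [this]
        exact List.get_mem _ _
      exact hTsub _ (Finset.mem_toList.mp this)
  have hget0 : ∀ (hb : (0:ℕ) < l.length), l.get ⟨0, hb⟩ = p₃ := fun _ => rfl
  have hgetone : ∀ (hb : (1:ℕ) < l.length), l.get ⟨1, hb⟩ = p₂ := fun _ => rfl
  have hget2 : ∀ (hb : (2:ℕ) < l.length), l.get ⟨2, hb⟩ = p₄ := fun _ => rfl
  -- the cyclic sequence of papers
  have hmodlt : ∀ s : ℕ, s % L < l.length := fun s => by
    rw [hlen]; exact Nat.mod_lt _ hL0
  set q : ℕ → Fin n := fun s => l.get ⟨s % L, hmodlt s⟩ with hq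
  have hqmem : ∀ s, q s ∈ l := fun s => List.get_mem _ _
  have hqeq : ∀ (s' b : ℕ) (hb : b < l.length), s' % L = b → q s' = l.get ⟨b, hb⟩ := by
    intro s' b hb hsb
    show l.get ⟨s' % L, hmodlt s'⟩ = l.get ⟨b, hb⟩
    congr 1
    exact Fin.ext hsb
  -- every reviewer misses some paper of the cycle
  have hmiss : ∀ i : Fin m, ∃ x ∈ l, x ∉ P i := by
    intro i
    by_contra h
    push_neg at h
    have hsub : l.toFinset ⊆ P i := fun x hx => h x (List.mem_toFinset.mp hx)
    have hc := Finset.card_le_card hsub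
    rw [List.toFinset_card_of_nodup hnd, hlen, hcard] at hc
    omega
  choose x hxl hxP using hmiss
  set t : Fin m → ℕ := fun i => l.idxOf (x i) with ht
  have ht_lt : ∀ i, t i < L := fun i => by
    rw [← hlen]; exact List.idxOf_lt_length_iff.mpr (hxl i)
  have ht_ne : ∀ (i : Fin m) (s : ℕ), q s ∈ P i → s % L ≠ t i := by
    intro i s hs heq
    apply hxP i
    have hx' : l.get ⟨s % L, hmodlt s⟩ = x i := by
      have h1 : l.idxOf (l.get ⟨s % L, hmodlt s⟩) = s % L :=
        List.get_idxOf hnd _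
      have h2 : l.idxOf (l.get ⟨s % L, hmodlt s⟩) = l.idxOf (x i) := by
        rw [h1, heq, ht]
      exact (List.idxOf_inj (hqmem s)).mp h2
    rw [← hx']; exact hs
  -- the rankings
  set r : Fin m → Fin n → ℕ := fun i y =>
    if y ∈ l then (l.idxOf y + (L - 1 - t i)) % L else L + y.val with hr
  have hrinj : ∀ i, Function.Injective (r i) := by
    intro i a b hab
    simp only [hr] at hab
    by_cases ha : a ∈ l <;> by_cases hb : b ∈ l <;>
      simp only [ha, hb, if_true, if_false] at hab
    · have h1 : l.idxOf a < L := by rw [← hlen]; exact List.idxOf_lt_length_iff.mpr ha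
      have h2 : l.idxOf b < L := by rw [← hlen]; exact List.idxOf_lt_length_iff.mpr hb
      have hmeq : l.idxOf a % L = l.idxOf b % L := by
        have h3 : Nat.ModEq L (l.idxOf a + (L - 1 - t i)) (l.idxOf b + (L - 1 - t i)) := hab
        exact Nat.ModEq.add_right_cancel' _ h3
      rw [Nat.mod_eq_of_lt h1, Nat.mod_eq_of_lt h2] at hmeq
      exact (List.idxOf_inj ha).mp hmeq
    · have := Nat.mod_lt (l.idxOf a + (L - 1 - t i)) hL0
      omega
    · have := Nat.mod_lt (l.idxOf b + (L - 1 - t i)) hL0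
      omega
    · exact Fin.val_injective (by omega)
  set π : Profile m n P := fun i => ⟨r i, (hrinj i).injOn⟩ with hπ
  -- the key cyclic inequalities
  have key : ∀ s : ℕ, f π (q s) < f π (q (s + 1)) := by
    intro s
    have hnext : (s + 1) % L = (s % L + 1) % L := by
      conv_lhs => rw [Nat.add_mod]
      rw [Nat.mod_eq_of_lt (by omega : 1 < L)]
    have hb0 : (0:ℕ) < l.length := by rw [hlen]; omega
    have hb1 : (1:ℕ) < l.length := by rw [hlen]; omega
    have hb2 : (2:ℕ) < l.length := by rw [hlen]; omega
    -- both endpoints of every edge are covered by a common reviewer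
    have hedge : ∃ i, q s ∈ P i ∧ q (s + 1) ∈ P i := by
      by_cases h0' : s % L = 0
      · have hs1 : (s + 1) % L = 1 := by
          rw [hnext, h0', Nat.zero_add]
          exact Nat.mod_eq_of_lt (by omega)
        refine ⟨i₂, ?_, ?_⟩
        · rw [hqeq s 0 hb0 h0', hget0 hb0]; exact hp₃2
        · rw [hqeq (s+1) 1 hb1 hs1, hgetone hb1]; exact hp₂1
      · by_cases h1' : s % L = 1
        · have hs2' : (s + 1) % L = 2 := by
            rw [hnext, h1']
            exact Nat.mod_eq_of_lt (by omega)
          refine ⟨i₂, ?_, ?_⟩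
          · rw [hqeq s 1 hb1 h1', hgetone hb1]; exact hp₂1
          · rw [hqeq (s+1) 2 hb2 hs2', hget2 hb2]; exact hp₄2
        · refine ⟨i₁, hget1 (s % L) (hmodlt s) h1', ?_⟩
          have hne1 : (s + 1) % L ≠ 1 := by
            rw [hnext]
            rcases Nat.lt_or_ge (s % L + 1) L with h' | h'
            · rw [Nat.mod_eq_of_lt h']; omega
            · have hsL : s % L = L - 1 := by have := hmodlt s; rw [hlen] at this; omega
              rw [hsL, show L - 1 + 1 = L from by omega, Nat.mod_self]
              omega
          exact hget1 ((s + 1) % L) (hmodlt (s + 1)) hne1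
    refine hpu π (q s) (q (s + 1)) hedge ?_
    intro i his his'
    show r i (q s) < r i (q (s + 1))
    have hidx : l.idxOf (q s) = s % L := List.get_idxOf hnd _
    have hidx' : l.idxOf (q (s + 1)) = (s + 1) % L := List.get_idxOf hnd _
    simp only [hr, if_pos (hqmem s), if_pos (hqmem (s + 1)), hidx, hidx']
    conv_rhs => rw [hnext, Nat.mod_add_mod]
    have haL : s % L < L := by have := hmodlt s; rwa [hlen] at this
    exact cyc_step_lt haL (ht_lt i) (ht_ne i s his)
  -- chain the inequalities around the cycle: contradiction
  have chain : ∀ k : ℕ, (f π (q 0)).val + k ≤ (f π (q k)).val := by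
    intro k
    induction k with
    | zero => omega
    | succ k ih =>
      have h' := key k
      rw [Fin.lt_def] at h'
      omega
  have hLL := chain L
  have hb0' : (0:ℕ) < l.length := by rw [hlen]; omega
  have hq0 : q L = q 0 := by
    rw [hqeq L 0 hb0' (Nat.mod_self L), hqeq 0 0 hb0' (Nat.zero_mod L)]
  rw [hq0] at hLL
  omega
end

section
/- Let n ≥ 4 and let the papers be partitioned into four disjoint nonempty sets Q_1, Q_2, Q_3, Q_4. Consider the review graph with three reviewers where reviewer 1 reviews Q_1 ∪ Q_2, reviewer 2 reviews Q_2 ∪ Q_3, and reviewer 3 reviews Q_3 ∪ Q_4. Then there is no aggregation rule f such that (M, f) is both group unanimous and weakly strategyproof. -/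
/-- Group unanimity. -/
def GroupUnanimous {m n : ℕ} (P : Fin m → Finset (Fin n))
    (f : Profile m n P → Equiv.Perm (Fin n)) : Prop :=
  ∀ (π : Profile m n P) (S : Finset (Fin n)), S.Nonempty → S ⊂ Finset.univ →
    (∀ i p q, p ∈ P i → q ∈ P i → p ∈ S → q ∉ S → (π i).1 p < (π i).1 q) →
    ∀ p q, p ∈ S → q ∉ S → (∃ i, p ∈ P i ∧ q ∈ P i) →
      f π p < f π q

/-- Weak strategyproofness: for every reviewer `i` there is some paper whose
output position is unchanged across any two profiles differing only in
reviewer `i`'s ranking. -/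
def WeaklyStrategyproof {m n : ℕ} (P : Fin m → Finset (Fin n))
    (f : Profile m n P → Equiv.Perm (Fin n)) : Prop :=
  ∀ i : Fin m, ∃ j : Fin n, ∀ π π' : Profile m n P,
    (∀ i', i' ≠ i → π i' = π' i') → f π j = f π' j

namespace NoGuWsp

def lo (i : Fin 3) : Fin 4 := ⟨i.val, by omega⟩
def hi (i : Fin 3) : Fin 4 := ⟨i.val + 1, by omega⟩

def prefB (v : Fin 3 → Bool) (i : Fin 3) : Fin 4 := if v i then hi i else lo i
def othB (v : Fin 3 → Bool) (i : Fin 3) : Fin 4 := if v i then lo i else hi i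

lemma pref_ne_oth (v : Fin 3 → Bool) (i : Fin 3) : prefB v i ≠ othB v i := by
  unfold prefB othB lo hi
  cases v i <;> simp [Fin.ext_iff]

def vA : Fin 3 → Bool := ![false, false, false]
def vB : Fin 3 → Bool := ![true, true, true]
def vC : Fin 3 → Bool := ![true, false, false]
def vD : Fin 3 → Bool := ![true, true, false]
def vE : Fin 3 → Bool := ![false, true, false]
def vG : Fin 3 → Bool := ![true, false, true]

variable {n : ℕ}

def rk (β : Fin n → Fin 4) (v : Fin 3 → Bool) (i : Fin 3) : Fin n → ℕ :=
  fun p => if β p = prefB v i then (p : ℕ) else n + (p : ℕ)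

lemma rk_inj (β : Fin n → Fin 4) (v : Fin 3 → Bool) (i : Fin 3) :
    Function.Injective (rk β v i) := by
  intro p q h
  have hp := p.isLt
  have hq := q.isLt
  unfold rk at h
  split_ifs at h <;> exact Fin.ext (by omega)

def mkProf (P : Fin 3 → Finset (Fin n)) (β : Fin n → Fin 4) (v : Fin 3 → Bool) :
    Profile 3 n P :=
  fun i => ⟨rk β v i, (rk_inj β v i).injOn⟩

lemma mkProf_congr (P : Fin 3 → Finset (Fin n)) (β : Fin n → Fin 4)
    {v w : Fin 3 → Bool} (i : Fin 3) (h : v i = w i) :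
    mkProf P β v i = mkProf P β w i := by
  have hpref : prefB v i = prefB w i := by unfold prefB; rw [h]
  apply Subtype.ext
  funext p
  show rk β v i p = rk β w i p
  unfold rk
  rw [hpref]

lemma master {Q : Fin 4 → Finset (Fin n)} {P : Fin 3 → Finset (Fin n)}
    {f : Profile 3 n P → Equiv.Perm (Fin n)} {β : Fin n → Fin 4}
    (hGU : GroupUnanimous P f)
    (hP : ∀ i, P i = Q (lo i) ∪ Q (hi i))
    (hβ : ∀ p, p ∈ Q (β p)) (hβu : ∀ (p : Fin n) k, p ∈ Q k → β p = k)
    (v : Fin 3 → Bool) (θ : Fin 4 → ℕ) (hθn : ∀ k, θ k ≤ n)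
    (hcond : ∀ i, θ (othB v i) = 0 ∨ θ (prefB v i) = n)
    {p q : Fin n} (hp : (p : ℕ) < θ (β p)) (hq : ¬ ((q : ℕ) < θ (β q)))
    (i0 : Fin 3) (hpi : p ∈ P i0) (hqi : q ∈ P i0) :
    f (mkProf P β v) p < f (mkProf P β v) q := by
  set S : Finset (Fin n) := Finset.univ.filter (fun t => (t : ℕ) < θ (β t)) with hS
  have hmem : ∀ t : Fin n, t ∈ S ↔ (t : ℕ) < θ (β t) := by
    intro t; simp [hS]
  have hpS : p ∈ S := (hmem p).2 hp
  have hqS : q ∉ S := fun h => hq ((hmem q).1 h)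
  have hss : S ⊂ Finset.univ := by
    rw [Finset.ssubset_univ_iff]
    intro h
    exact hqS (h ▸ Finset.mem_univ q)
  apply hGU _ S ⟨p, hpS⟩ hss _ p q hpS hqS ⟨i0, hpi, hqi⟩
  intro i p' q' hp'P hq'P hp'S hq'S
  have hblk : ∀ t : Fin n, t ∈ P i → β t = prefB v i ∨ β t = othB v i := by
    intro t ht
    rw [hP i] at ht
    unfold prefB othB
    rcases Finset.mem_union.1 ht with h | h
    · have hb := hβu t _ h
      cases hv : v i <;> simp [hv, hb]
    · have hb := hβu t _ h
      cases hv : v i <;> simp [hv, hb]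
  have hp'S' : (p' : ℕ) < θ (β p') := (hmem p').1 hp'S
  have hq'S' : ¬ (q' : ℕ) < θ (β q') := fun h => hq'S ((hmem q').2 h)
  show rk β v i p' < rk β v i q'
  unfold rk
  rcases hcond i with h0 | hn'
  · have hpv : β p' = prefB v i := by
      rcases hblk p' hp'P with e | e
      · exact e
      · rw [e, h0] at hp'S'; omega
    rw [if_pos hpv]
    rw [hpv] at hp'S'
    rcases hblk q' hq'P with e | e
    · rw [if_pos e]
      rw [e] at hq'S'
      omega
    · rw [if_neg (show ¬ (β q' = prefB v i) from fun h => pref_ne_oth v i (h.symm.trans e))]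
      have := hθn (prefB v i)
      omega
  · have hqoth : β q' = othB v i := by
      rcases hblk q' hq'P with e | e
      · exfalso
        rw [e, hn'] at hq'S'
        exact hq'S' q'.isLt
      · exact e
    rw [if_neg (show ¬ (β q' = prefB v i) from fun h => pref_ne_oth v i (h.symm.trans hqoth))]
    rw [hqoth] at hq'S'
    rcases hblk p' hp'P with e' | e'
    · rw [if_pos e']
      have := p'.isLt
      omega
    · rw [if_neg (show ¬ (β p' = prefB v i) from fun h => pref_ne_oth v i (h.symm.trans e'))]
      rw [e'] at hp'S'
      omega

lemma count_below (σ : Equiv.Perm (Fin n)) (j : Fin n) (T : Finset (Fin n))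
    (h : ∀ t ∈ T, σ t < σ j) : T.card ≤ ((σ j : Fin n) : ℕ) := by
  have : T.card ≤ (Finset.range ((σ j : Fin n) : ℕ)).card := by
    apply Finset.card_le_card_of_injOn (fun t => ((σ t : Fin n) : ℕ))
    · intro t ht
      simp only [Finset.coe_range, Set.mem_Iio]
      exact h t ht
    · intro t1 _ t2 _ he
      exact σ.injective (Fin.ext he)
  simpa using this

lemma count_above (σ : Equiv.Perm (Fin n)) (j : Fin n) (T : Finset (Fin n))
    (h : ∀ t ∈ T, σ j < σ t) : ((σ j : Fin n) : ℕ) + T.card < n := by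
  have hj : ((σ j : Fin n) : ℕ) < n := (σ j).isLt
  have hcard : T.card ≤ (Finset.Ico (((σ j : Fin n) : ℕ) + 1) n).card := by
    apply Finset.card_le_card_of_injOn (fun t => ((σ t : Fin n) : ℕ))
    · intro t ht
      simp only [Finset.coe_Ico, Set.mem_Ico]
      exact ⟨h t ht, (σ t).isLt⟩
    · intro t1 _ t2 _ he
      exact σ.injective (Fin.ext he)
  rw [Nat.card_Ico] at hcard
  omega

end NoGuWsp
namespace NoGuWsp
theorem main {n : ℕ} (Q : Fin 4 → Finset (Fin n))
    (hne : ∀ a, (Q a).Nonempty)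
    (hdisj : ∀ a b, a ≠ b → Disjoint (Q a) (Q b))
    (hcover : Finset.univ.biUnion Q = Finset.univ)
    (P : Fin 3 → Finset (Fin n))
    (hP : ∀ i, P i = Q (lo i) ∪ Q (hi i))
    (f : Profile 3 n P → Equiv.Perm (Fin n))
    (hGU : GroupUnanimous P f) (hWSP : WeaklyStrategyproof P f) : False := by
  have hex : ∀ p : Fin n, ∃ k, p ∈ Q k := by
    intro p
    have hp : p ∈ Finset.univ.biUnion Q := by rw [hcover]; exact Finset.mem_univ p
    obtain ⟨k, _, hk⟩ := Finset.mem_biUnion.1 hp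
    exact ⟨k, hk⟩
  choose β hβ using hex
  have hβu : ∀ (p : Fin n) (k : Fin 4), p ∈ Q k → β p = k := by
    intro p k hk
    by_contra hnk
    exact Finset.disjoint_left.1 (hdisj _ _ hnk) (hβ p) hk
  -- sizes
  have hsum : (Q 0).card + (Q 1).card + (Q 2).card + (Q 3).card = n := by
    have hdU : (Finset.univ.biUnion Q).card = ∑ k, (Q k).card :=
      Finset.card_biUnion (fun x _ y _ hxy => hdisj x y hxy)
    rw [hcover] at hdU
    simp only [Finset.card_univ, Fintype.card_fin, Fin.sum_univ_four] at hdU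
    omega
  have hQpos : ∀ k, 1 ≤ (Q k).card := fun k => Finset.card_pos.2 (hne k)
  -- ranks
  set lows : Fin n → Finset (Fin n) :=
    fun p => (Q (β p)).filter (fun t => (t : ℕ) < (p : ℕ)) with hlowsdef
  set ups : Fin n → Finset (Fin n) :=
    fun p => (Q (β p)).filter (fun t => (p : ℕ) < (t : ℕ)) with hupsdef
  have hlowmem : ∀ (x t : Fin n), t ∈ lows x → β t = β x ∧ (t : ℕ) < (x : ℕ) := by
    intro x t ht
    rw [hlowsdef] at ht
    exact ⟨hβu t _ (Finset.mem_filter.1 ht).1, (Finset.mem_filter.1 ht).2⟩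
  have hupmem : ∀ (x t : Fin n), t ∈ ups x → β t = β x ∧ (x : ℕ) < (t : ℕ) := by
    intro x t ht
    rw [hupsdef] at ht
    exact ⟨hβu t _ (Finset.mem_filter.1 ht).1, (Finset.mem_filter.1 ht).2⟩
  have hlowsub : ∀ (x : Fin n) (k : Fin 4), β x = k → lows x ⊆ Q k := by
    intro x k hk; rw [hlowsdef, ← hk]; exact Finset.filter_subset _ _
  have hupsub : ∀ (x : Fin n) (k : Fin 4), β x = k → ups x ⊆ Q k := by
    intro x k hk; rw [hupsdef, ← hk]; exact Finset.filter_subset _ _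
  have hmemlow : ∀ (x t : Fin n), β t = β x → (t : ℕ) < (x : ℕ) → t ∈ lows x := by
    intro x t h1 h2
    rw [hlowsdef]
    exact Finset.mem_filter.2 ⟨h1 ▸ hβ t, h2⟩
  have hsplit : ∀ p : Fin n, (lows p).card + (ups p).card + 1 = (Q (β p)).card := by
    intro p
    have h1 : ((Q (β p)).filter (fun (t : Fin n) => (t : ℕ) < (p : ℕ))).card
        + ((Q (β p)).filter (fun (t : Fin n) => ¬ (t : ℕ) < (p : ℕ))).card
        = (Q (β p)).card :=
      Finset.card_filter_add_card_filter_not _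
    have h2 : (Q (β p)).filter (fun (t : Fin n) => ¬ (t : ℕ) < (p : ℕ)) = insert p (ups p) := by
      ext t
      rw [hupsdef]
      simp only [Finset.mem_filter, Finset.mem_insert, not_lt]
      constructor
      · rintro ⟨htQ, hle⟩
        rcases Nat.eq_or_lt_of_le hle with h | h
        · exact Or.inl (Fin.ext h.symm)
        · exact Or.inr ⟨htQ, h⟩
      · rintro (rfl | ⟨htQ, hlt⟩)
        · exact ⟨hβ _, le_refl _⟩
        · exact ⟨htQ, le_of_lt hlt⟩
    have h3 : p ∉ ups p := by
      intro hmem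
      rw [hupsdef] at hmem
      exact absurd (Finset.mem_filter.1 hmem).2 (lt_irrefl _)
    rw [h2, Finset.card_insert_of_notMem h3] at h1
    simp only [hlowsdef, hupsdef] at h1 ⊢
    omega
  -- membership in review sets
  have hmemP : ∀ (i0 : Fin 3) (t : Fin n), β t = lo i0 ∨ β t = hi i0 → t ∈ P i0 := by
    intro i0 t ht
    rw [hP i0]
    rcases ht with h | h
    · exact Finset.mem_union_left _ (h ▸ hβ t)
    · exact Finset.mem_union_right _ (h ▸ hβ t)
  have hrev : ∀ k : Fin 4, ∃ i0 : Fin 3, lo i0 = k ∨ hi i0 = k := by decide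
  have fin4 : ∀ u : Fin 4, u = 0 ∨ u = 1 ∨ u = 2 ∨ u = 3 := by decide
  have wit : ∀ k : Fin 4, ∃ t : Fin n, β t = k :=
    fun k => ⟨(hne k).choose, hβu _ k (hne k).choose_spec⟩
  -- profiles
  have M : ∀ (v : Fin 3 → Bool) (θ : Fin 4 → ℕ), (∀ k, θ k ≤ n) →
      (∀ i, θ (othB v i) = 0 ∨ θ (prefB v i) = n) →
      ∀ p q : Fin n, (p : ℕ) < θ (β p) → ¬ ((q : ℕ) < θ (β q)) →
      ∀ i0 : Fin 3, p ∈ P i0 → q ∈ P i0 →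
      f (mkProf P β v) p < f (mkProf P β v) q :=
    fun v θ h1 h2 p q h3 h4 i0 h5 h6 => master hGU hP hβ hβu v θ h1 h2 h3 h4 i0 h5 h6

  have hlov : ∀ i : Fin 3, ((lo i : Fin 4) : ℕ) = (i : ℕ) := fun _ => rfl
  have hhiv : ∀ i : Fin 3, ((hi i : Fin 4) : ℕ) = (i : ℕ) + 1 := fun _ => rfl
  have hvAf : ∀ i, vA i = false := by decide
  have hvBt : ∀ i, vB i = true := by decide
  -- Profile A : adjacent blocks
  have Aadj : ∀ (i0 : Fin 3) (p q : Fin n), β p = lo i0 → β q = hi i0 →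
      f (mkProf P β vA) p < f (mkProf P β vA) q := by
    intro i0 p q hp hq
    have hpn := p.isLt
    refine M vA (fun t => if (t : ℕ) ≤ (i0 : ℕ) then n else 0) ?_ ?_ p q ?_ ?_ i0
      (hmemP i0 p (Or.inl hp)) (hmemP i0 q (Or.inr hq))
    · intro k; split_ifs <;> omega
    · intro i
      have h1 : prefB vA i = lo i := by unfold prefB; rw [hvAf i]; rfl
      have h2 : othB vA i = hi i := by unfold othB; rw [hvAf i]; rfl
      rw [h1, h2]
      rw [hlov, hhiv]
      by_cases h : (i : ℕ) + 1 ≤ (i0 : ℕ)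
      · right; rw [if_pos (by omega)]
      · left; rw [if_neg h]
    · rw [hp]; rw [hlov, if_pos (le_refl _)]; exact hpn
    · rw [hq]; rw [hhiv, if_neg (by omega)]; omega
  -- Profile A : all cross-block comparisons
  have ltA : ∀ p q : Fin n, ((β p : Fin 4) : ℕ) < ((β q : Fin 4) : ℕ) →
      f (mkProf P β vA) p < f (mkProf P β vA) q := by
    have step : ∀ (k : ℕ) (hk : k < 3) (p q : Fin n),
        ((β p : Fin 4) : ℕ) = k → ((β q : Fin 4) : ℕ) = k + 1 →
        f (mkProf P β vA) p < f (mkProf P β vA) q := by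
      intro k hk p q h1 h2
      exact Aadj ⟨k, hk⟩ p q (Fin.ext h1) (Fin.ext h2)
    intro p q h
    have hq4 := (β q).isLt
    by_cases e1 : ((β q : Fin 4) : ℕ) = ((β p : Fin 4) : ℕ) + 1
    · exact step _ (by omega) p q rfl e1
    · by_cases e2 : ((β q : Fin 4) : ℕ) = ((β p : Fin 4) : ℕ) + 2
      · obtain ⟨t, ht⟩ := wit ⟨((β p : Fin 4) : ℕ) + 1, by omega⟩
        have htv : ((β t : Fin 4) : ℕ) = ((β p : Fin 4) : ℕ) + 1 := by rw [ht]
        exact lt_trans (step _ (by omega) p t rfl htv) (step _ (by omega) t q htv e2)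
      · have e3 : ((β q : Fin 4) : ℕ) = ((β p : Fin 4) : ℕ) + 3 := by omega
        obtain ⟨t, ht⟩ := wit ⟨((β p : Fin 4) : ℕ) + 1, by omega⟩
        obtain ⟨t', ht'⟩ := wit ⟨((β p : Fin 4) : ℕ) + 2, by omega⟩
        have htv : ((β t : Fin 4) : ℕ) = ((β p : Fin 4) : ℕ) + 1 := by rw [ht]
        have htv' : ((β t' : Fin 4) : ℕ) = ((β p : Fin 4) : ℕ) + 2 := by rw [ht']
        exact lt_trans (step _ (by omega) p t rfl htv)
          (lt_trans (step _ (by omega) t t' htv htv') (step _ (by omega) t' q htv' e3))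
  -- Profile A : within blocks
  have AW : ∀ p q : Fin n, β q = β p → (p : ℕ) < (q : ℕ) →
      f (mkProf P β vA) p < f (mkProf P β vA) q := by
    intro p q hbq hpq
    have hpn := p.isLt
    obtain ⟨i0, hi0⟩ := hrev (β p)
    refine M vA (fun t => if (t : ℕ) < ((β p : Fin 4) : ℕ) then n
        else if t = β p then (p : ℕ) + 1 else 0) ?_ ?_ p q ?_ ?_ i0
      (hmemP i0 p (hi0.imp Eq.symm Eq.symm))
      (hmemP i0 q (by rw [hbq]; exact hi0.imp Eq.symm Eq.symm))
    · intro k; split_ifs <;> omega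
    · intro i
      have h1 : prefB vA i = lo i := by unfold prefB; rw [hvAf i]; rfl
      have h2 : othB vA i = hi i := by unfold othB; rw [hvAf i]; rfl
      rw [h1, h2]
      by_cases ha : ((hi i : Fin 4) : ℕ) < ((β p : Fin 4) : ℕ)
      · right; rw [if_pos (show ((lo i : Fin 4) : ℕ) < _ by rw [hlov]; rw [hhiv] at ha; omega)]
      · by_cases hb2 : hi i = β p
        · right
          rw [if_pos (show ((lo i : Fin 4) : ℕ) < ((β p : Fin 4) : ℕ) by
            rw [hlov, ← hb2, hhiv]; omega)]
        · left; rw [if_neg ha, if_neg hb2]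
    · rw [if_neg (by omega), if_pos rfl]; omega
    · rw [hbq, if_neg (by omega), if_pos rfl]; omega
  -- Profile B : adjacent blocks (reversed)
  have Badj : ∀ (i0 : Fin 3) (p q : Fin n), β p = hi i0 → β q = lo i0 →
      f (mkProf P β vB) p < f (mkProf P β vB) q := by
    intro i0 p q hp hq
    have hpn := p.isLt
    refine M vB (fun t => if (i0 : ℕ) + 1 ≤ (t : ℕ) then n else 0) ?_ ?_ p q ?_ ?_ i0
      (hmemP i0 p (Or.inr hp)) (hmemP i0 q (Or.inl hq))
    · intro k; split_ifs <;> omega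
    · intro i
      have h1 : prefB vB i = hi i := by unfold prefB; rw [hvBt i]; rfl
      have h2 : othB vB i = lo i := by unfold othB; rw [hvBt i]; rfl
      rw [h1, h2]
      rw [hlov, hhiv]
      by_cases h : (i0 : ℕ) + 1 ≤ (i : ℕ)
      · right; rw [if_pos (by omega)]
      · left; rw [if_neg (by omega)]
    · rw [hp]; rw [hhiv, if_pos (by omega)]; exact hpn
    · rw [hq]; rw [hlov, if_neg (by omega)]; omega
  have ltB : ∀ p q : Fin n, ((β q : Fin 4) : ℕ) < ((β p : Fin 4) : ℕ) →
      f (mkProf P β vB) p < f (mkProf P β vB) q := by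
    have step : ∀ (k : ℕ) (hk : k < 3) (p q : Fin n),
        ((β p : Fin 4) : ℕ) = k + 1 → ((β q : Fin 4) : ℕ) = k →
        f (mkProf P β vB) p < f (mkProf P β vB) q := by
      intro k hk p q h1 h2
      exact Badj ⟨k, hk⟩ p q (Fin.ext h1) (Fin.ext h2)
    intro p q h
    have hp4 := (β p).isLt
    by_cases e1 : ((β p : Fin 4) : ℕ) = ((β q : Fin 4) : ℕ) + 1
    · exact step _ (by omega) p q e1 rfl
    · by_cases e2 : ((β p : Fin 4) : ℕ) = ((β q : Fin 4) : ℕ) + 2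
      · obtain ⟨t, ht⟩ := wit ⟨((β q : Fin 4) : ℕ) + 1, by omega⟩
        have htv : ((β t : Fin 4) : ℕ) = ((β q : Fin 4) : ℕ) + 1 := by rw [ht]
        exact lt_trans (step _ (by omega) p t e2 htv) (step _ (by omega) t q htv rfl)
      · have e3 : ((β p : Fin 4) : ℕ) = ((β q : Fin 4) : ℕ) + 3 := by omega
        obtain ⟨t, ht⟩ := wit ⟨((β q : Fin 4) : ℕ) + 2, by omega⟩
        obtain ⟨t', ht'⟩ := wit ⟨((β q : Fin 4) : ℕ) + 1, by omega⟩
        have htv : ((β t : Fin 4) : ℕ) = ((β q : Fin 4) : ℕ) + 2 := by rw [ht]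
        have htv' : ((β t' : Fin 4) : ℕ) = ((β q : Fin 4) : ℕ) + 1 := by rw [ht']
        exact lt_trans (step _ (by omega) p t e3 htv)
          (lt_trans (step _ (by omega) t t' htv htv') (step _ (by omega) t' q htv' rfl))
  -- Profile B : within blocks
  have BW : ∀ p q : Fin n, β q = β p → (p : ℕ) < (q : ℕ) →
      f (mkProf P β vB) p < f (mkProf P β vB) q := by
    intro p q hbq hpq
    have hpn := p.isLt
    obtain ⟨i0, hi0⟩ := hrev (β p)
    refine M vB (fun t => if ((β p : Fin 4) : ℕ) < (t : ℕ) then n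
        else if t = β p then (p : ℕ) + 1 else 0) ?_ ?_ p q ?_ ?_ i0
      (hmemP i0 p (hi0.imp Eq.symm Eq.symm))
      (hmemP i0 q (by rw [hbq]; exact hi0.imp Eq.symm Eq.symm))
    · intro k; split_ifs <;> omega
    · intro i
      have h1 : prefB vB i = hi i := by unfold prefB; rw [hvBt i]; rfl
      have h2 : othB vB i = lo i := by unfold othB; rw [hvBt i]; rfl
      rw [h1, h2]
      by_cases ha : ((β p : Fin 4) : ℕ) < ((lo i : Fin 4) : ℕ)
      · right; rw [if_pos (show ((β p : Fin 4) : ℕ) < ((hi i : Fin 4) : ℕ) by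
          rw [hhiv]; rw [hlov] at ha; omega)]
      · by_cases hb2 : lo i = β p
        · right
          rw [if_pos (show ((β p : Fin 4) : ℕ) < ((hi i : Fin 4) : ℕ) by
            rw [hhiv, ← hb2, hlov]; omega)]
        · left; rw [if_neg ha, if_neg hb2]
    · rw [if_neg (by omega), if_pos rfl]; omega
    · rw [hbq, if_neg (by omega), if_pos rfl]; omega
  -- Profile C facts
  have Cc1 : ∀ p q : Fin n, β p = 1 → (β q = 0 ∨ β q = 2) →
      f (mkProf P β vC) p < f (mkProf P β vC) q := by
    intro p q hp hq
    have hpn := p.isLt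
    have hcnd : ∀ i, (fun (t : Fin 4) => if t = 1 then n else 0) (othB vC i) = 0 ∨
        (fun (t : Fin 4) => if t = 1 then n else 0) (prefB vC i) = n := by
      intro i; fin_cases i <;> dsimp only
      · right; rw [if_pos (by decide)]
      · right; rw [if_pos (by decide)]
      · left; rw [if_neg (by decide)]
    have hθ : ∀ k : Fin 4, (fun (t : Fin 4) => if t = 1 then n else 0) k ≤ n := by
      intro k; dsimp only; split_ifs <;> omega
    have hpθ : (p : ℕ) < (fun (t : Fin 4) => if t = 1 then n else 0) (β p) := by
      rw [hp]; dsimp only; rw [if_pos rfl]; exact hpn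
    rcases hq with hq | hq
    · exact M vC _ hθ hcnd p q hpθ
        (by rw [hq]; rw [if_neg (by decide)]; omega) 0
        (hmemP 0 p (Or.inr (hp.trans (by decide))))
        (hmemP 0 q (Or.inl (hq.trans (by decide))))
    · exact M vC _ hθ hcnd p q hpθ
        (by rw [hq]; rw [if_neg (by decide)]; omega) 1
        (hmemP 1 p (Or.inl (hp.trans (by decide))))
        (hmemP 1 q (Or.inr (hq.trans (by decide))))
  have Cc2 : ∀ p q : Fin n, β p = 2 → β q = 3 →
      f (mkProf P β vC) p < f (mkProf P β vC) q := by
    intro p q hp hq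
    have hpn := p.isLt
    refine M vC (fun t => if t = 1 ∨ t = 2 then n else 0) ?_ ?_ p q ?_ ?_ 2
      (hmemP 2 p (Or.inl (hp.trans (by decide))))
      (hmemP 2 q (Or.inr (hq.trans (by decide))))
    · intro k; split_ifs <;> omega
    · intro i; fin_cases i <;> dsimp only
      · right; rw [if_pos (by decide)]
      · right; rw [if_pos (by decide)]
      · right; rw [if_pos (by decide)]
    · rw [hp]; rw [if_pos (by decide)]; exact hpn
    · rw [hq]; rw [if_neg (by decide)]; omega
  have C1q : ∀ p q : Fin n, β p = 1 → β q ≠ 1 → f (mkProf P β vC) p < f (mkProf P β vC) q := by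
    intro p q hp hq
    rcases fin4 (β q) with e | e | e | e
    · exact Cc1 p q hp (Or.inl e)
    · exact absurd e hq
    · exact Cc1 p q hp (Or.inr e)
    · obtain ⟨t, ht⟩ := wit 2
      exact lt_trans (Cc1 p t hp (Or.inr ht)) (Cc2 t q ht e)
  have CW : ∀ p q : Fin n, β q = β p → (p : ℕ) < (q : ℕ) →
      f (mkProf P β vC) p < f (mkProf P β vC) q := by
    intro p q hbq hpq
    have hpn := p.isLt
    obtain ⟨i0, hi0⟩ := hrev (β p)
    refine M vC (fun t => if t = β p then (p : ℕ) + 1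
        else if (t = 1 ∧ β p ≠ 1) ∨ (t = 2 ∧ β p = 3) then n else 0) ?_ ?_ p q ?_ ?_ i0
      (hmemP i0 p (hi0.imp Eq.symm Eq.symm))
      (hmemP i0 q (by rw [hbq]; exact hi0.imp Eq.symm Eq.symm))
    · intro k; split_ifs <;> omega
    · intro i
      rcases fin4 (β p) with e | e | e | e <;> rw [e] <;> fin_cases i <;> dsimp only <;>
        first
          | (left; rw [if_neg (by decide), if_neg (by decide)])
          | (right; rw [if_neg (by decide), if_pos (by decide)])
    · rw [if_pos rfl]; omega
    · rw [hbq, if_pos rfl]; omega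
  -- Profile D facts
  have Dd1 : ∀ p q : Fin n, β p = 2 → (β q = 1 ∨ β q = 3) →
      f (mkProf P β vD) p < f (mkProf P β vD) q := by
    intro p q hp hq
    have hpn := p.isLt
    have hcnd : ∀ i, (fun (t : Fin 4) => if t = 2 then n else 0) (othB vD i) = 0 ∨
        (fun (t : Fin 4) => if t = 2 then n else 0) (prefB vD i) = n := by
      intro i; fin_cases i <;> dsimp only
      · left; rw [if_neg (by decide)]
      · right; rw [if_pos (by decide)]
      · right; rw [if_pos (by decide)]
    have hθ : ∀ k : Fin 4, (fun (t : Fin 4) => if t = 2 then n else 0) k ≤ n := by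
      intro k; dsimp only; split_ifs <;> omega
    have hpθ : (p : ℕ) < (fun (t : Fin 4) => if t = 2 then n else 0) (β p) := by
      rw [hp]; dsimp only; rw [if_pos rfl]; exact hpn
    rcases hq with hq | hq
    · exact M vD _ hθ hcnd p q hpθ
        (by rw [hq]; rw [if_neg (by decide)]; omega) 1
        (hmemP 1 p (Or.inr (hp.trans (by decide))))
        (hmemP 1 q (Or.inl (hq.trans (by decide))))
    · exact M vD _ hθ hcnd p q hpθ
        (by rw [hq]; rw [if_neg (by decide)]; omega) 2
        (hmemP 2 p (Or.inl (hp.trans (by decide))))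
        (hmemP 2 q (Or.inr (hq.trans (by decide))))
  have Dd2 : ∀ p q : Fin n, β p = 1 → β q = 0 →
      f (mkProf P β vD) p < f (mkProf P β vD) q := by
    intro p q hp hq
    have hpn := p.isLt
    refine M vD (fun t => if t = 1 ∨ t = 2 then n else 0) ?_ ?_ p q ?_ ?_ 0
      (hmemP 0 p (Or.inr (hp.trans (by decide))))
      (hmemP 0 q (Or.inl (hq.trans (by decide))))
    · intro k; split_ifs <;> omega
    · intro i; fin_cases i <;> dsimp only
      · right; rw [if_pos (by decide)]
      · right; rw [if_pos (by decide)]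
      · right; rw [if_pos (by decide)]
    · rw [hp]; rw [if_pos (by decide)]; exact hpn
    · rw [hq]; rw [if_neg (by decide)]; omega
  have D2q : ∀ p q : Fin n, β p = 2 → β q ≠ 2 → f (mkProf P β vD) p < f (mkProf P β vD) q := by
    intro p q hp hq
    rcases fin4 (β q) with e | e | e | e
    · obtain ⟨t, ht⟩ := wit 1
      exact lt_trans (Dd1 p t hp (Or.inl ht)) (Dd2 t q ht e)
    · exact Dd1 p q hp (Or.inl e)
    · exact absurd e hq
    · exact Dd1 p q hp (Or.inr e)
  have DW : ∀ p q : Fin n, β q = β p → (p : ℕ) < (q : ℕ) →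
      f (mkProf P β vD) p < f (mkProf P β vD) q := by
    intro p q hbq hpq
    have hpn := p.isLt
    obtain ⟨i0, hi0⟩ := hrev (β p)
    refine M vD (fun t => if t = β p then (p : ℕ) + 1
        else if (t = 2 ∧ β p ≠ 2) ∨ (t = 1 ∧ β p = 0) then n else 0) ?_ ?_ p q ?_ ?_ i0
      (hmemP i0 p (hi0.imp Eq.symm Eq.symm))
      (hmemP i0 q (by rw [hbq]; exact hi0.imp Eq.symm Eq.symm))
    · intro k; split_ifs <;> omega
    · intro i
      rcases fin4 (β p) with e | e | e | e <;> rw [e] <;> fin_cases i <;> dsimp only <;>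
        first
          | (left; rw [if_neg (by decide), if_neg (by decide)])
          | (right; rw [if_neg (by decide), if_pos (by decide)])
    · rw [if_pos rfl]; omega
    · rw [hbq, if_pos rfl]; omega
  -- Profile E : within block 3
  have EW3 : ∀ p q : Fin n, β p = 3 → β q = 3 → (p : ℕ) < (q : ℕ) →
      f (mkProf P β vE) p < f (mkProf P β vE) q := by
    intro p q hp hq hpq
    have hpn := p.isLt
    refine M vE (fun t => if t = 3 then (p : ℕ) + 1 else if t = 2 then n else 0)
      ?_ ?_ p q ?_ ?_ 2
      (hmemP 2 p (Or.inr (hp.trans (by decide))))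
      (hmemP 2 q (Or.inr (hq.trans (by decide))))
    · intro k; split_ifs <;> omega
    · intro i; fin_cases i <;> dsimp only
      · left; rw [if_neg (by decide), if_neg (by decide)]
      · left; rw [if_neg (by decide), if_neg (by decide)]
      · right; rw [if_neg (by decide), if_pos (by decide)]
    · rw [hp]; rw [if_pos rfl]; omega
    · rw [hq]; rw [if_pos rfl]; omega
  -- Profile G : within block 0
  have GW0 : ∀ p q : Fin n, β p = 0 → β q = 0 → (p : ℕ) < (q : ℕ) →
      f (mkProf P β vG) p < f (mkProf P β vG) q := by
    intro p q hp hq hpq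
    have hpn := p.isLt
    refine M vG (fun t => if t = 0 then (p : ℕ) + 1 else if t = 1 then n else 0)
      ?_ ?_ p q ?_ ?_ 0
      (hmemP 0 p (Or.inl (hp.trans (by decide))))
      (hmemP 0 q (Or.inl (hq.trans (by decide))))
    · intro k; split_ifs <;> omega
    · intro i; fin_cases i <;> dsimp only
      · right; rw [if_neg (by decide), if_pos (by decide)]
      · left; rw [if_neg (by decide), if_neg (by decide)]
      · left; rw [if_neg (by decide), if_neg (by decide)]
    · rw [hp]; rw [if_pos rfl]; omega
    · rw [hq]; rw [if_pos rfl]; omega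
  -- WSP witnesses and profile equalities
  obtain ⟨j0, hj0⟩ := hWSP 0
  obtain ⟨j1, hj1⟩ := hWSP 1
  obtain ⟨j2, hj2⟩ := hWSP 2
  have EAC : f (mkProf P β vA) j0 = f (mkProf P β vC) j0 := by
    apply hj0; intro i' h; apply mkProf_congr; fin_cases i'
    · exact absurd rfl h
    · rfl
    · rfl
  have EED : f (mkProf P β vE) j0 = f (mkProf P β vD) j0 := by
    apply hj0; intro i' h; apply mkProf_congr; fin_cases i'
    · exact absurd rfl h
    · rfl
    · rfl
  have ECD : f (mkProf P β vC) j1 = f (mkProf P β vD) j1 := by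
    apply hj1; intro i' h; apply mkProf_congr; fin_cases i'
    · rfl
    · exact absurd rfl h
    · rfl
  have EAE : f (mkProf P β vA) j1 = f (mkProf P β vE) j1 := by
    apply hj1; intro i' h; apply mkProf_congr; fin_cases i'
    · rfl
    · exact absurd rfl h
    · rfl
  have EGB : f (mkProf P β vG) j1 = f (mkProf P β vB) j1 := by
    apply hj1; intro i' h; apply mkProf_congr; fin_cases i'
    · rfl
    · exact absurd rfl h
    · rfl
  have EDB : f (mkProf P β vD) j2 = f (mkProf P β vB) j2 := by
    apply hj2; intro i' h; apply mkProf_congr; fin_cases i'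
    · rfl
    · rfl
    · exact absurd rfl h
  have ECG : f (mkProf P β vC) j2 = f (mkProf P β vG) j2 := by
    apply hj2; intro i' h; apply mkProf_congr; fin_cases i'
    · rfl
    · rfl
    · exact absurd rfl h
  -- helpers
  have djQ : ∀ {s t : Finset (Fin n)} {k l : Fin 4}, s ⊆ Q k → t ⊆ Q l → k ≠ l →
      Disjoint s t := fun hs ht hkl => (hdisj _ _ hkl).mono hs ht
  have sQ : ∀ k : Fin 4, Q k ⊆ Q k := fun k => Finset.Subset.refl _
  have hsing : ∀ (x : Fin n) (k : Fin 4), β x = k → ({x} : Finset (Fin n)) ⊆ Q k :=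
    fun x k hk => Finset.singleton_subset_iff.2 (hk ▸ hβ x)
  have cardU2 : ∀ {s t : Finset (Fin n)}, Disjoint s t → (s ∪ t).card = s.card + t.card :=
    fun h => Finset.card_union_of_disjoint h
  -- Step 1 : the block of j0
  have hβj0 : β j0 = 2 ∨ β j0 = 3 := by
    rcases fin4 (β j0) with e | e | e | e
    · exfalso
      have hup : ∀ t ∈ (ups j0 ∪ (Q 1 ∪ (Q 2 ∪ Q 3))),
          f (mkProf P β vA) j0 < f (mkProf P β vA) t := by
        intro t ht
        rcases Finset.mem_union.1 ht with h | h
        · exact AW j0 t (hupmem j0 t h).1 (hupmem j0 t h).2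
        rcases Finset.mem_union.1 h with h | h
        · exact ltA j0 t (by rw [e, hβu t 1 h]; decide)
        rcases Finset.mem_union.1 h with h | h
        · exact ltA j0 t (by rw [e, hβu t 2 h]; decide)
        · exact ltA j0 t (by rw [e, hβu t 3 h]; decide)
      have h1 := count_above (f (mkProf P β vA)) j0 _ hup
      have hc1 : (ups j0 ∪ (Q 1 ∪ (Q 2 ∪ Q 3))).card
          = (ups j0).card + ((Q 1).card + ((Q 2).card + (Q 3).card)) := by
        rw [cardU2 (Finset.disjoint_union_right.2
              ⟨djQ (hupsub j0 0 e) (sQ 1) (by decide),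
               Finset.disjoint_union_right.2
                 ⟨djQ (hupsub j0 0 e) (sQ 2) (by decide),
                  djQ (hupsub j0 0 e) (sQ 3) (by decide)⟩⟩),
            cardU2 (Finset.disjoint_union_right.2
              ⟨djQ (sQ 1) (sQ 2) (by decide), djQ (sQ 1) (sQ 3) (by decide)⟩),
            cardU2 (djQ (sQ 2) (sQ 3) (by decide))]
      rw [hc1] at h1
      have hlo : ∀ t ∈ (Q 1 ∪ lows j0),
          f (mkProf P β vC) t < f (mkProf P β vC) j0 := by
        intro t ht
        rcases Finset.mem_union.1 ht with h | h
        · exact Cc1 t j0 (hβu t 1 h) (Or.inl e)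
        · exact CW t j0 (hlowmem j0 t h).1.symm (hlowmem j0 t h).2
      have h2 := count_below (f (mkProf P β vC)) j0 _ hlo
      have hc2 : (Q 1 ∪ lows j0).card = (Q 1).card + (lows j0).card :=
        cardU2 (djQ (sQ 1) (hlowsub j0 0 e) (by decide))
      rw [hc2] at h2
      have eAC := congrArg Fin.val EAC
      have hs := hsplit j0
      rw [e] at hs
      have := hQpos 1
      omega
    · exfalso
      have hlo : ∀ t ∈ (Q 0 ∪ lows j0),
          f (mkProf P β vA) t < f (mkProf P β vA) j0 := by
        intro t ht
        rcases Finset.mem_union.1 ht with h | h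
        · exact ltA t j0 (by rw [e, hβu t 0 h]; decide)
        · exact AW t j0 (hlowmem j0 t h).1.symm (hlowmem j0 t h).2
      have h1 := count_below (f (mkProf P β vA)) j0 _ hlo
      have hc1 : (Q 0 ∪ lows j0).card = (Q 0).card + (lows j0).card :=
        cardU2 (djQ (sQ 0) (hlowsub j0 1 e) (by decide))
      rw [hc1] at h1
      have hup : ∀ t ∈ (ups j0 ∪ (Q 0 ∪ (Q 2 ∪ Q 3))),
          f (mkProf P β vC) j0 < f (mkProf P β vC) t := by
        intro t ht
        rcases Finset.mem_union.1 ht with h | h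
        · exact CW j0 t (hupmem j0 t h).1 (hupmem j0 t h).2
        rcases Finset.mem_union.1 h with h | h
        · exact C1q j0 t e (by rw [hβu t 0 h]; decide)
        rcases Finset.mem_union.1 h with h | h
        · exact C1q j0 t e (by rw [hβu t 2 h]; decide)
        · exact C1q j0 t e (by rw [hβu t 3 h]; decide)
      have h2 := count_above (f (mkProf P β vC)) j0 _ hup
      have hc2 : (ups j0 ∪ (Q 0 ∪ (Q 2 ∪ Q 3))).card
          = (ups j0).card + ((Q 0).card + ((Q 2).card + (Q 3).card)) := by
        rw [cardU2 (Finset.disjoint_union_right.2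
              ⟨djQ (hupsub j0 1 e) (sQ 0) (by decide),
               Finset.disjoint_union_right.2
                 ⟨djQ (hupsub j0 1 e) (sQ 2) (by decide),
                  djQ (hupsub j0 1 e) (sQ 3) (by decide)⟩⟩),
            cardU2 (Finset.disjoint_union_right.2
              ⟨djQ (sQ 0) (sQ 2) (by decide), djQ (sQ 0) (sQ 3) (by decide)⟩),
            cardU2 (djQ (sQ 2) (sQ 3) (by decide))]
      rw [hc2] at h2
      have eAC := congrArg Fin.val EAC
      have hs := hsplit j0
      rw [e] at hs
      have := hQpos 0
      omega
    · exact Or.inl e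
    · exact Or.inr e
  -- Step 2 : the block of j2
  have hβj2 : β j2 = 0 ∨ β j2 = 1 := by
    rcases fin4 (β j2) with e | e | e | e
    · exact Or.inl e
    · exact Or.inr e
    · exfalso
      have hlo : ∀ t ∈ (Q 3 ∪ lows j2),
          f (mkProf P β vB) t < f (mkProf P β vB) j2 := by
        intro t ht
        rcases Finset.mem_union.1 ht with h | h
        · exact ltB t j2 (by rw [e, hβu t 3 h]; decide)
        · exact BW t j2 (hlowmem j2 t h).1.symm (hlowmem j2 t h).2
      have h1 := count_below (f (mkProf P β vB)) j2 _ hlo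
      have hc1 : (Q 3 ∪ lows j2).card = (Q 3).card + (lows j2).card :=
        cardU2 (djQ (sQ 3) (hlowsub j2 2 e) (by decide))
      rw [hc1] at h1
      have hup : ∀ t ∈ (ups j2 ∪ (Q 0 ∪ (Q 1 ∪ Q 3))),
          f (mkProf P β vD) j2 < f (mkProf P β vD) t := by
        intro t ht
        rcases Finset.mem_union.1 ht with h | h
        · exact DW j2 t (hupmem j2 t h).1 (hupmem j2 t h).2
        rcases Finset.mem_union.1 h with h | h
        · exact D2q j2 t e (by rw [hβu t 0 h]; decide)
        rcases Finset.mem_union.1 h with h | h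
        · exact D2q j2 t e (by rw [hβu t 1 h]; decide)
        · exact D2q j2 t e (by rw [hβu t 3 h]; decide)
      have h2 := count_above (f (mkProf P β vD)) j2 _ hup
      have hc2 : (ups j2 ∪ (Q 0 ∪ (Q 1 ∪ Q 3))).card
          = (ups j2).card + ((Q 0).card + ((Q 1).card + (Q 3).card)) := by
        rw [cardU2 (Finset.disjoint_union_right.2
              ⟨djQ (hupsub j2 2 e) (sQ 0) (by decide),
               Finset.disjoint_union_right.2
                 ⟨djQ (hupsub j2 2 e) (sQ 1) (by decide),
                  djQ (hupsub j2 2 e) (sQ 3) (by decide)⟩⟩),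
            cardU2 (Finset.disjoint_union_right.2
              ⟨djQ (sQ 0) (sQ 1) (by decide), djQ (sQ 0) (sQ 3) (by decide)⟩),
            cardU2 (djQ (sQ 1) (sQ 3) (by decide))]
      rw [hc2] at h2
      have eDB := congrArg Fin.val EDB
      have hs := hsplit j2
      rw [e] at hs
      have := hQpos 3
      omega
    · exfalso
      have hup : ∀ t ∈ (ups j2 ∪ (Q 0 ∪ (Q 1 ∪ Q 2))),
          f (mkProf P β vB) j2 < f (mkProf P β vB) t := by
        intro t ht
        rcases Finset.mem_union.1 ht with h | h
        · exact BW j2 t (hupmem j2 t h).1 (hupmem j2 t h).2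
        rcases Finset.mem_union.1 h with h | h
        · exact ltB j2 t (by rw [e, hβu t 0 h]; decide)
        rcases Finset.mem_union.1 h with h | h
        · exact ltB j2 t (by rw [e, hβu t 1 h]; decide)
        · exact ltB j2 t (by rw [e, hβu t 2 h]; decide)
      have h1 := count_above (f (mkProf P β vB)) j2 _ hup
      have hc1 : (ups j2 ∪ (Q 0 ∪ (Q 1 ∪ Q 2))).card
          = (ups j2).card + ((Q 0).card + ((Q 1).card + (Q 2).card)) := by
        rw [cardU2 (Finset.disjoint_union_right.2
              ⟨djQ (hupsub j2 3 e) (sQ 0) (by decide),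
               Finset.disjoint_union_right.2
                 ⟨djQ (hupsub j2 3 e) (sQ 1) (by decide),
                  djQ (hupsub j2 3 e) (sQ 2) (by decide)⟩⟩),
            cardU2 (Finset.disjoint_union_right.2
              ⟨djQ (sQ 0) (sQ 1) (by decide), djQ (sQ 0) (sQ 2) (by decide)⟩),
            cardU2 (djQ (sQ 1) (sQ 2) (by decide))]
      rw [hc1] at h1
      have hlo : ∀ t ∈ (Q 2 ∪ lows j2),
          f (mkProf P β vD) t < f (mkProf P β vD) j2 := by
        intro t ht
        rcases Finset.mem_union.1 ht with h | h
        · exact Dd1 t j2 (hβu t 2 h) (Or.inr e)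
        · exact DW t j2 (hlowmem j2 t h).1.symm (hlowmem j2 t h).2
      have h2 := count_below (f (mkProf P β vD)) j2 _ hlo
      have hc2 : (Q 2 ∪ lows j2).card = (Q 2).card + (lows j2).card :=
        cardU2 (djQ (sQ 2) (hlowsub j2 3 e) (by decide))
      rw [hc2] at h2
      have eDB := congrArg Fin.val EDB
      have hs := hsplit j2
      rw [e] at hs
      have := hQpos 2
      omega
  -- F1 : in profile C, every element of Q 0 lies below j0
  have F1 : ∀ t ∈ Q 0, f (mkProf P β vC) t < f (mkProf P β vC) j0 := by
    intro q0 hq0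
    by_contra hcon
    have hbq0 : β q0 = 0 := hβu q0 0 hq0
    have hne0 : q0 ≠ j0 := by
      intro h
      rw [h] at hbq0
      rcases hβj0 with e | e <;> rw [e] at hbq0 <;> exact absurd hbq0 (by decide)
    have hgt : f (mkProf P β vC) j0 < f (mkProf P β vC) q0 :=
      lt_of_le_of_ne (not_lt.1 hcon)
        (fun h => hne0 ((f (mkProf P β vC)).injective h.symm))
    rcases hβj0 with e | e
    · have hlo : ∀ t ∈ (Q 0 ∪ (Q 1 ∪ lows j0)),
          f (mkProf P β vA) t < f (mkProf P β vA) j0 := by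
        intro t ht
        rcases Finset.mem_union.1 ht with h | h
        · exact ltA t j0 (by rw [e, hβu t 0 h]; decide)
        rcases Finset.mem_union.1 h with h | h
        · exact ltA t j0 (by rw [e, hβu t 1 h]; decide)
        · exact AW t j0 (hlowmem j0 t h).1.symm (hlowmem j0 t h).2
      have h1 := count_below (f (mkProf P β vA)) j0 _ hlo
      have hc1 : (Q 0 ∪ (Q 1 ∪ lows j0)).card
          = (Q 0).card + ((Q 1).card + (lows j0).card) := by
        rw [cardU2 (Finset.disjoint_union_right.2
              ⟨djQ (sQ 0) (sQ 1) (by decide), djQ (sQ 0) (hlowsub j0 2 e) (by decide)⟩),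
            cardU2 (djQ (sQ 1) (hlowsub j0 2 e) (by decide))]
      rw [hc1] at h1
      have hup : ∀ t ∈ ({q0} ∪ (Q 3 ∪ ups j0)),
          f (mkProf P β vC) j0 < f (mkProf P β vC) t := by
        intro t ht
        rcases Finset.mem_union.1 ht with h | h
        · rw [Finset.mem_singleton.1 h]; exact hgt
        rcases Finset.mem_union.1 h with h | h
        · exact Cc2 j0 t e (hβu t 3 h)
        · exact CW j0 t (hupmem j0 t h).1 (hupmem j0 t h).2
      have h2 := count_above (f (mkProf P β vC)) j0 _ hup
      have hc2 : ({q0} ∪ (Q 3 ∪ ups j0)).card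
          = 1 + ((Q 3).card + (ups j0).card) := by
        rw [cardU2 (Finset.disjoint_union_right.2
              ⟨djQ (hsing q0 0 hbq0) (sQ 3) (by decide),
               djQ (hsing q0 0 hbq0) (hupsub j0 2 e) (by decide)⟩),
            cardU2 (djQ (sQ 3) (hupsub j0 2 e) (by decide)),
            Finset.card_singleton]
      rw [hc2] at h2
      have eAC := congrArg Fin.val EAC
      have hs := hsplit j0
      rw [e] at hs
      omega
    · have hlo : ∀ t ∈ (Q 0 ∪ (Q 1 ∪ (Q 2 ∪ lows j0))),
          f (mkProf P β vA) t < f (mkProf P β vA) j0 := by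
        intro t ht
        rcases Finset.mem_union.1 ht with h | h
        · exact ltA t j0 (by rw [e, hβu t 0 h]; decide)
        rcases Finset.mem_union.1 h with h | h
        · exact ltA t j0 (by rw [e, hβu t 1 h]; decide)
        rcases Finset.mem_union.1 h with h | h
        · exact ltA t j0 (by rw [e, hβu t 2 h]; decide)
        · exact AW t j0 (hlowmem j0 t h).1.symm (hlowmem j0 t h).2
      have h1 := count_below (f (mkProf P β vA)) j0 _ hlo
      have hc1 : (Q 0 ∪ (Q 1 ∪ (Q 2 ∪ lows j0))).card
          = (Q 0).card + ((Q 1).card + ((Q 2).card + (lows j0).card)) := by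
        rw [cardU2 (Finset.disjoint_union_right.2
              ⟨djQ (sQ 0) (sQ 1) (by decide),
               Finset.disjoint_union_right.2
                 ⟨djQ (sQ 0) (sQ 2) (by decide), djQ (sQ 0) (hlowsub j0 3 e) (by decide)⟩⟩),
            cardU2 (Finset.disjoint_union_right.2
              ⟨djQ (sQ 1) (sQ 2) (by decide), djQ (sQ 1) (hlowsub j0 3 e) (by decide)⟩),
            cardU2 (djQ (sQ 2) (hlowsub j0 3 e) (by decide))]
      rw [hc1] at h1
      have hup : ∀ t ∈ ({q0} ∪ ups j0),
          f (mkProf P β vC) j0 < f (mkProf P β vC) t := by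
        intro t ht
        rcases Finset.mem_union.1 ht with h | h
        · rw [Finset.mem_singleton.1 h]; exact hgt
        · exact CW j0 t (hupmem j0 t h).1 (hupmem j0 t h).2
      have h2 := count_above (f (mkProf P β vC)) j0 _ hup
      have hc2 : ({q0} ∪ ups j0).card = 1 + (ups j0).card := by
        rw [cardU2 (djQ (hsing q0 0 hbq0) (hupsub j0 3 e) (by decide)),
            Finset.card_singleton]
      rw [hc2] at h2
      have eAC := congrArg Fin.val EAC
      have hs := hsplit j0
      rw [e] at hs
      omega
  -- F2 : in profile D, every element of Q 3 lies below j2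
  have F2 : ∀ t ∈ Q 3, f (mkProf P β vD) t < f (mkProf P β vD) j2 := by
    intro q3 hq3
    by_contra hcon
    have hbq3 : β q3 = 3 := hβu q3 3 hq3
    have hne3 : q3 ≠ j2 := by
      intro h
      rw [h] at hbq3
      rcases hβj2 with e | e <;> rw [e] at hbq3 <;> exact absurd hbq3 (by decide)
    have hgt : f (mkProf P β vD) j2 < f (mkProf P β vD) q3 :=
      lt_of_le_of_ne (not_lt.1 hcon)
        (fun h => hne3 ((f (mkProf P β vD)).injective h.symm))
    rcases hβj2 with e | e
    · have hlo : ∀ t ∈ (Q 1 ∪ (Q 2 ∪ (Q 3 ∪ lows j2))),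
          f (mkProf P β vB) t < f (mkProf P β vB) j2 := by
        intro t ht
        rcases Finset.mem_union.1 ht with h | h
        · exact ltB t j2 (by rw [e, hβu t 1 h]; decide)
        rcases Finset.mem_union.1 h with h | h
        · exact ltB t j2 (by rw [e, hβu t 2 h]; decide)
        rcases Finset.mem_union.1 h with h | h
        · exact ltB t j2 (by rw [e, hβu t 3 h]; decide)
        · exact BW t j2 (hlowmem j2 t h).1.symm (hlowmem j2 t h).2
      have h1 := count_below (f (mkProf P β vB)) j2 _ hlo
      have hc1 : (Q 1 ∪ (Q 2 ∪ (Q 3 ∪ lows j2))).card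
          = (Q 1).card + ((Q 2).card + ((Q 3).card + (lows j2).card)) := by
        rw [cardU2 (Finset.disjoint_union_right.2
              ⟨djQ (sQ 1) (sQ 2) (by decide),
               Finset.disjoint_union_right.2
                 ⟨djQ (sQ 1) (sQ 3) (by decide), djQ (sQ 1) (hlowsub j2 0 e) (by decide)⟩⟩),
            cardU2 (Finset.disjoint_union_right.2
              ⟨djQ (sQ 2) (sQ 3) (by decide), djQ (sQ 2) (hlowsub j2 0 e) (by decide)⟩),
            cardU2 (djQ (sQ 3) (hlowsub j2 0 e) (by decide))]
      rw [hc1] at h1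
      have hup : ∀ t ∈ ({q3} ∪ ups j2),
          f (mkProf P β vD) j2 < f (mkProf P β vD) t := by
        intro t ht
        rcases Finset.mem_union.1 ht with h | h
        · rw [Finset.mem_singleton.1 h]; exact hgt
        · exact DW j2 t (hupmem j2 t h).1 (hupmem j2 t h).2
      have h2 := count_above (f (mkProf P β vD)) j2 _ hup
      have hc2 : ({q3} ∪ ups j2).card = 1 + (ups j2).card := by
        rw [cardU2 (djQ (hsing q3 3 hbq3) (hupsub j2 0 e) (by decide)),
            Finset.card_singleton]
      rw [hc2] at h2
      have eDB := congrArg Fin.val EDB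
      have hs := hsplit j2
      rw [e] at hs
      omega
    · have hlo : ∀ t ∈ (Q 2 ∪ (Q 3 ∪ lows j2)),
          f (mkProf P β vB) t < f (mkProf P β vB) j2 := by
        intro t ht
        rcases Finset.mem_union.1 ht with h | h
        · exact ltB t j2 (by rw [e, hβu t 2 h]; decide)
        rcases Finset.mem_union.1 h with h | h
        · exact ltB t j2 (by rw [e, hβu t 3 h]; decide)
        · exact BW t j2 (hlowmem j2 t h).1.symm (hlowmem j2 t h).2
      have h1 := count_below (f (mkProf P β vB)) j2 _ hlo
      have hc1 : (Q 2 ∪ (Q 3 ∪ lows j2)).card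
          = (Q 2).card + ((Q 3).card + (lows j2).card) := by
        rw [cardU2 (Finset.disjoint_union_right.2
              ⟨djQ (sQ 2) (sQ 3) (by decide), djQ (sQ 2) (hlowsub j2 1 e) (by decide)⟩),
            cardU2 (djQ (sQ 3) (hlowsub j2 1 e) (by decide))]
      rw [hc1] at h1
      have hup : ∀ t ∈ ({q3} ∪ (Q 0 ∪ ups j2)),
          f (mkProf P β vD) j2 < f (mkProf P β vD) t := by
        intro t ht
        rcases Finset.mem_union.1 ht with h | h
        · rw [Finset.mem_singleton.1 h]; exact hgt
        rcases Finset.mem_union.1 h with h | h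
        · exact Dd2 j2 t e (hβu t 0 h)
        · exact DW j2 t (hupmem j2 t h).1 (hupmem j2 t h).2
      have h2 := count_above (f (mkProf P β vD)) j2 _ hup
      have hc2 : ({q3} ∪ (Q 0 ∪ ups j2)).card
          = 1 + ((Q 0).card + (ups j2).card) := by
        rw [cardU2 (Finset.disjoint_union_right.2
              ⟨djQ (hsing q3 3 hbq3) (sQ 0) (by decide),
               djQ (hsing q3 3 hbq3) (hupsub j2 1 e) (by decide)⟩),
            cardU2 (djQ (sQ 0) (hupsub j2 1 e) (by decide)),
            Finset.card_singleton]
      rw [hc2] at h2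
      have eDB := congrArg Fin.val EDB
      have hs := hsplit j2
      rw [e] at hs
      omega
  -- Step 3 : the block of j1
  have hβj1 : β j1 = 0 ∨ β j1 = 3 := by
    rcases fin4 (β j1) with e | e | e | e
    · exact Or.inl e
    · exfalso
      have hup : ∀ t ∈ (ups j1 ∪ (Q 0 ∪ (Q 2 ∪ Q 3))),
          f (mkProf P β vC) j1 < f (mkProf P β vC) t := by
        intro t ht
        rcases Finset.mem_union.1 ht with h | h
        · exact CW j1 t (hupmem j1 t h).1 (hupmem j1 t h).2
        rcases Finset.mem_union.1 h with h | h
        · exact C1q j1 t e (by rw [hβu t 0 h]; decide)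
        rcases Finset.mem_union.1 h with h | h
        · exact C1q j1 t e (by rw [hβu t 2 h]; decide)
        · exact C1q j1 t e (by rw [hβu t 3 h]; decide)
      have h1 := count_above (f (mkProf P β vC)) j1 _ hup
      have hc1 : (ups j1 ∪ (Q 0 ∪ (Q 2 ∪ Q 3))).card
          = (ups j1).card + ((Q 0).card + ((Q 2).card + (Q 3).card)) := by
        rw [cardU2 (Finset.disjoint_union_right.2
              ⟨djQ (hupsub j1 1 e) (sQ 0) (by decide),
               Finset.disjoint_union_right.2
                 ⟨djQ (hupsub j1 1 e) (sQ 2) (by decide),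
                  djQ (hupsub j1 1 e) (sQ 3) (by decide)⟩⟩),
            cardU2 (Finset.disjoint_union_right.2
              ⟨djQ (sQ 0) (sQ 2) (by decide), djQ (sQ 0) (sQ 3) (by decide)⟩),
            cardU2 (djQ (sQ 2) (sQ 3) (by decide))]
      rw [hc1] at h1
      have hlo : ∀ t ∈ (Q 2 ∪ lows j1),
          f (mkProf P β vD) t < f (mkProf P β vD) j1 := by
        intro t ht
        rcases Finset.mem_union.1 ht with h | h
        · exact Dd1 t j1 (hβu t 2 h) (Or.inl e)
        · exact DW t j1 (hlowmem j1 t h).1.symm (hlowmem j1 t h).2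
      have h2 := count_below (f (mkProf P β vD)) j1 _ hlo
      have hc2 : (Q 2 ∪ lows j1).card = (Q 2).card + (lows j1).card :=
        cardU2 (djQ (sQ 2) (hlowsub j1 1 e) (by decide))
      rw [hc2] at h2
      have eCD := congrArg Fin.val ECD
      have hs := hsplit j1
      rw [e] at hs
      have := hQpos 2
      omega
    · exfalso
      have hlo : ∀ t ∈ (Q 1 ∪ lows j1),
          f (mkProf P β vC) t < f (mkProf P β vC) j1 := by
        intro t ht
        rcases Finset.mem_union.1 ht with h | h
        · exact Cc1 t j1 (hβu t 1 h) (Or.inr e)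
        · exact CW t j1 (hlowmem j1 t h).1.symm (hlowmem j1 t h).2
      have h1 := count_below (f (mkProf P β vC)) j1 _ hlo
      have hc1 : (Q 1 ∪ lows j1).card = (Q 1).card + (lows j1).card :=
        cardU2 (djQ (sQ 1) (hlowsub j1 2 e) (by decide))
      rw [hc1] at h1
      have hup : ∀ t ∈ (ups j1 ∪ (Q 0 ∪ (Q 1 ∪ Q 3))),
          f (mkProf P β vD) j1 < f (mkProf P β vD) t := by
        intro t ht
        rcases Finset.mem_union.1 ht with h | h
        · exact DW j1 t (hupmem j1 t h).1 (hupmem j1 t h).2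
        rcases Finset.mem_union.1 h with h | h
        · exact D2q j1 t e (by rw [hβu t 0 h]; decide)
        rcases Finset.mem_union.1 h with h | h
        · exact D2q j1 t e (by rw [hβu t 1 h]; decide)
        · exact D2q j1 t e (by rw [hβu t 3 h]; decide)
      have h2 := count_above (f (mkProf P β vD)) j1 _ hup
      have hc2 : (ups j1 ∪ (Q 0 ∪ (Q 1 ∪ Q 3))).card
          = (ups j1).card + ((Q 0).card + ((Q 1).card + (Q 3).card)) := by
        rw [cardU2 (Finset.disjoint_union_right.2
              ⟨djQ (hupsub j1 2 e) (sQ 0) (by decide),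
               Finset.disjoint_union_right.2
                 ⟨djQ (hupsub j1 2 e) (sQ 1) (by decide),
                  djQ (hupsub j1 2 e) (sQ 3) (by decide)⟩⟩),
            cardU2 (Finset.disjoint_union_right.2
              ⟨djQ (sQ 0) (sQ 1) (by decide), djQ (sQ 0) (sQ 3) (by decide)⟩),
            cardU2 (djQ (sQ 1) (sQ 3) (by decide))]
      rw [hc2] at h2
      have eCD := congrArg Fin.val ECD
      have hs := hsplit j1
      rw [e] at hs
      have := hQpos 1
      omega
    · exact Or.inr e
  rcases hβj1 with e1 | e1
  · -- Step 5 : β j1 = 0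
    have hloD : ∀ t ∈ (Q 1 ∪ (Q 2 ∪ lows j1)),
        f (mkProf P β vD) t < f (mkProf P β vD) j1 := by
      intro t ht
      rcases Finset.mem_union.1 ht with h | h
      · exact Dd2 t j1 (hβu t 1 h) e1
      rcases Finset.mem_union.1 h with h | h
      · exact D2q t j1 (hβu t 2 h) (by rw [e1]; decide)
      · exact DW t j1 (hlowmem j1 t h).1.symm (hlowmem j1 t h).2
    have hD1 := count_below (f (mkProf P β vD)) j1 _ hloD
    have hcD1 : (Q 1 ∪ (Q 2 ∪ lows j1)).card
        = (Q 1).card + ((Q 2).card + (lows j1).card) := by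
      rw [cardU2 (Finset.disjoint_union_right.2
            ⟨djQ (sQ 1) (sQ 2) (by decide), djQ (sQ 1) (hlowsub j1 0 e1) (by decide)⟩),
            cardU2 (djQ (sQ 2) (hlowsub j1 0 e1) (by decide))]
    rw [hcD1] at hD1
    have eCD := congrArg Fin.val ECD
    have hs1 := hsplit j1
    rw [e1] at hs1
    rcases hβj0 with e0 | e0
    · -- β j0 = 2 : case 5a
      have hs0 := hsplit j0
      rw [e0] at hs0
      have hj1j0C : f (mkProf P β vC) j1 < f (mkProf P β vC) j0 := F1 j1 (e1 ▸ hβ j1)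
      have hup : ∀ t ∈ (ups j1 ∪ ({j0} ∪ (Q 3 ∪ ups j0))),
          f (mkProf P β vC) j1 < f (mkProf P β vC) t := by
        intro t ht
        rcases Finset.mem_union.1 ht with h | h
        · exact CW j1 t (hupmem j1 t h).1 (hupmem j1 t h).2
        rcases Finset.mem_union.1 h with h | h
        · rw [Finset.mem_singleton.1 h]; exact hj1j0C
        rcases Finset.mem_union.1 h with h | h
        · exact lt_trans hj1j0C (Cc2 j0 t e0 (hβu t 3 h))
        · exact lt_trans hj1j0C (CW j0 t (hupmem j0 t h).1 (hupmem j0 t h).2)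
      have h2 := count_above (f (mkProf P β vC)) j1 _ hup
      have hc2 : (ups j1 ∪ ({j0} ∪ (Q 3 ∪ ups j0))).card
          = (ups j1).card + (1 + ((Q 3).card + (ups j0).card)) := by
        rw [cardU2 (Finset.disjoint_union_right.2
              ⟨djQ (hupsub j1 0 e1) (hsing j0 2 e0) (by decide),
               Finset.disjoint_union_right.2
                 ⟨djQ (hupsub j1 0 e1) (sQ 3) (by decide),
                  djQ (hupsub j1 0 e1) (hupsub j0 2 e0) (by decide)⟩⟩),
            cardU2 (Finset.disjoint_union_right.2
              ⟨Finset.disjoint_singleton_left.2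
                (fun hm => absurd (hβu j0 3 hm) (by rw [e0]; decide)),
               Finset.disjoint_singleton_left.2
                (fun hm => lt_irrefl _ (hupmem j0 j0 hm).2)⟩),
            cardU2 (djQ (sQ 3) (hupsub j0 2 e0) (by decide)),
            Finset.card_singleton]
      rw [hc2] at h2
      omega
    · -- β j0 = 3
      have hs0 := hsplit j0
      rw [e0] at hs0
      have step5b : f (mkProf P β vD) j2 ≤ f (mkProf P β vD) j1 → False := by
        intro hle
        have hlo2 : ∀ t ∈ (Q 1 ∪ (Q 2 ∪ (Q 3 ∪ lows j1))),
            f (mkProf P β vD) t < f (mkProf P β vD) j1 := by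
          intro t ht
          rcases Finset.mem_union.1 ht with h | h
          · exact Dd2 t j1 (hβu t 1 h) e1
          rcases Finset.mem_union.1 h with h | h
          · exact D2q t j1 (hβu t 2 h) (by rw [e1]; decide)
          rcases Finset.mem_union.1 h with h | h
          · exact lt_of_lt_of_le (F2 t h) hle
          · exact DW t j1 (hlowmem j1 t h).1.symm (hlowmem j1 t h).2
        have h2 := count_below (f (mkProf P β vD)) j1 _ hlo2
        have hc2 : (Q 1 ∪ (Q 2 ∪ (Q 3 ∪ lows j1))).card
            = (Q 1).card + ((Q 2).card + ((Q 3).card + (lows j1).card)) := by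
          rw [cardU2 (Finset.disjoint_union_right.2
                ⟨djQ (sQ 1) (sQ 2) (by decide),
                 Finset.disjoint_union_right.2
                   ⟨djQ (sQ 1) (sQ 3) (by decide), djQ (sQ 1) (hlowsub j1 0 e1) (by decide)⟩⟩),
            cardU2 (Finset.disjoint_union_right.2
                ⟨djQ (sQ 2) (sQ 3) (by decide), djQ (sQ 2) (hlowsub j1 0 e1) (by decide)⟩),
            cardU2 (djQ (sQ 3) (hlowsub j1 0 e1) (by decide))]
        rw [hc2] at h2
        have hj1j0C : f (mkProf P β vC) j1 < f (mkProf P β vC) j0 := F1 j1 (e1 ▸ hβ j1)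
        have hup2 : ∀ t ∈ (ups j1 ∪ ({j0} ∪ ups j0)),
            f (mkProf P β vC) j1 < f (mkProf P β vC) t := by
          intro t ht
          rcases Finset.mem_union.1 ht with h | h
          · exact CW j1 t (hupmem j1 t h).1 (hupmem j1 t h).2
          rcases Finset.mem_union.1 h with h | h
          · rw [Finset.mem_singleton.1 h]; exact hj1j0C
          · exact lt_trans hj1j0C (CW j0 t (hupmem j0 t h).1 (hupmem j0 t h).2)
        have h3 := count_above (f (mkProf P β vC)) j1 _ hup2
        have hc3 : (ups j1 ∪ ({j0} ∪ ups j0)).card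
            = (ups j1).card + (1 + (ups j0).card) := by
          rw [cardU2 (Finset.disjoint_union_right.2
                ⟨djQ (hupsub j1 0 e1) (hsing j0 3 e0) (by decide),
                 djQ (hupsub j1 0 e1) (hupsub j0 3 e0) (by decide)⟩),
            cardU2 (Finset.disjoint_singleton_left.2
                (fun hm => lt_irrefl _ (hupmem j0 j0 hm).2)),
            Finset.card_singleton]
        rw [hc3] at h3
        omega
      rcases hβj2 with e2 | e2
      · by_cases hv : (j2 : ℕ) ≤ (j1 : ℕ)
        · rcases Nat.eq_or_lt_of_le hv with heq | hlt
          · exact step5b (le_of_eq (by rw [show j2 = j1 from Fin.ext heq]))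
          · exact step5b (le_of_lt (DW j2 j1 (e1.trans e2.symm) hlt))
        · -- case 5c : β j2 = 0, j1 < j2
          push_neg at hv
          have hs2 := hsplit j2
          rw [e2] at hs2
          have hloB : ∀ t ∈ (Q 1 ∪ (Q 2 ∪ (Q 3 ∪ lows j1))),
              f (mkProf P β vB) t < f (mkProf P β vB) j1 := by
            intro t ht
            rcases Finset.mem_union.1 ht with h | h
            · exact ltB t j1 (by rw [e1, hβu t 1 h]; decide)
            rcases Finset.mem_union.1 h with h | h
            · exact ltB t j1 (by rw [e1, hβu t 2 h]; decide)
            rcases Finset.mem_union.1 h with h | h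
            · exact ltB t j1 (by rw [e1, hβu t 3 h]; decide)
            · exact BW t j1 (hlowmem j1 t h).1.symm (hlowmem j1 t h).2
          have hB1 := count_below (f (mkProf P β vB)) j1 _ hloB
          have hcB1 : (Q 1 ∪ (Q 2 ∪ (Q 3 ∪ lows j1))).card
              = (Q 1).card + ((Q 2).card + ((Q 3).card + (lows j1).card)) := by
            rw [cardU2 (Finset.disjoint_union_right.2
                  ⟨djQ (sQ 1) (sQ 2) (by decide),
                   Finset.disjoint_union_right.2
                     ⟨djQ (sQ 1) (sQ 3) (by decide), djQ (sQ 1) (hlowsub j1 0 e1) (by decide)⟩⟩),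
            cardU2 (Finset.disjoint_union_right.2
                  ⟨djQ (sQ 2) (sQ 3) (by decide), djQ (sQ 2) (hlowsub j1 0 e1) (by decide)⟩),
            cardU2 (djQ (sQ 3) (hlowsub j1 0 e1) (by decide))]
          rw [hcB1] at hB1
          have hB2 := count_above (f (mkProf P β vB)) j1 _
            (fun t ht => BW j1 t (hupmem j1 t ht).1 (hupmem j1 t ht).2)
          have eGB := congrArg Fin.val EGB
          have GupFact : ∀ t : Fin n, β t ≠ 0 → f (mkProf P β vG) t < f (mkProf P β vG) j1 := by
            intro t hbt
            by_contra hcon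
            have hnet : t ≠ j1 := fun h => hbt (by rw [h, e1])
            have hgt : f (mkProf P β vG) j1 < f (mkProf P β vG) t :=
              lt_of_le_of_ne (not_lt.1 hcon)
                (fun h => hnet ((f (mkProf P β vG)).injective h.symm))
            have hup : ∀ u ∈ ({t} ∪ ups j1),
                f (mkProf P β vG) j1 < f (mkProf P β vG) u := by
              intro u hu
              rcases Finset.mem_union.1 hu with h | h
              · rw [Finset.mem_singleton.1 h]; exact hgt
              · exact GW0 j1 u e1 ((hupmem j1 u h).1.trans e1) (hupmem j1 u h).2
            have hG := count_above (f (mkProf P β vG)) j1 _ hup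
            have hcG : ({t} ∪ ups j1).card = 1 + (ups j1).card := by
              rw [cardU2 (Finset.disjoint_singleton_left.2
                    (fun hm => hbt ((hupmem j1 t hm).1.trans e1))),
            Finset.card_singleton]
            rw [hcG] at hG
            omega
          have hj1j2G : f (mkProf P β vG) j1 < f (mkProf P β vG) j2 := GW0 j1 j2 e1 e2 hv
          have hloG : ∀ t ∈ (Q 1 ∪ (Q 2 ∪ (Q 3 ∪ lows j2))),
              f (mkProf P β vG) t < f (mkProf P β vG) j2 := by
            intro t ht
            rcases Finset.mem_union.1 ht with h | h
            · exact lt_trans (GupFact t (by rw [hβu t 1 h]; decide)) hj1j2G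
            rcases Finset.mem_union.1 h with h | h
            · exact lt_trans (GupFact t (by rw [hβu t 2 h]; decide)) hj1j2G
            rcases Finset.mem_union.1 h with h | h
            · exact lt_trans (GupFact t (by rw [hβu t 3 h]; decide)) hj1j2G
            · exact GW0 t j2 ((hlowmem j2 t h).1.trans e2) e2 (hlowmem j2 t h).2
          have hG2 := count_below (f (mkProf P β vG)) j2 _ hloG
          have hcG2 : (Q 1 ∪ (Q 2 ∪ (Q 3 ∪ lows j2))).card
              = (Q 1).card + ((Q 2).card + ((Q 3).card + (lows j2).card)) := by
            rw [cardU2 (Finset.disjoint_union_right.2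
                  ⟨djQ (sQ 1) (sQ 2) (by decide),
                   Finset.disjoint_union_right.2
                     ⟨djQ (sQ 1) (sQ 3) (by decide), djQ (sQ 1) (hlowsub j2 0 e2) (by decide)⟩⟩),
            cardU2 (Finset.disjoint_union_right.2
                  ⟨djQ (sQ 2) (sQ 3) (by decide), djQ (sQ 2) (hlowsub j2 0 e2) (by decide)⟩),
            cardU2 (djQ (sQ 3) (hlowsub j2 0 e2) (by decide))]
          rw [hcG2] at hG2
          have eCG := congrArg Fin.val ECG
          have hj2j0C : f (mkProf P β vC) j2 < f (mkProf P β vC) j0 := F1 j2 (e2 ▸ hβ j2)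
          have hupC : ∀ t ∈ (ups j2 ∪ ({j0} ∪ ups j0)),
              f (mkProf P β vC) j2 < f (mkProf P β vC) t := by
            intro t ht
            rcases Finset.mem_union.1 ht with h | h
            · exact CW j2 t (hupmem j2 t h).1 (hupmem j2 t h).2
            rcases Finset.mem_union.1 h with h | h
            · rw [Finset.mem_singleton.1 h]; exact hj2j0C
            · exact lt_trans hj2j0C (CW j0 t (hupmem j0 t h).1 (hupmem j0 t h).2)
          have hC2 := count_above (f (mkProf P β vC)) j2 _ hupC
          have hcC2 : (ups j2 ∪ ({j0} ∪ ups j0)).card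
              = (ups j2).card + (1 + (ups j0).card) := by
            rw [cardU2 (Finset.disjoint_union_right.2
                  ⟨djQ (hupsub j2 0 e2) (hsing j0 3 e0) (by decide),
                   djQ (hupsub j2 0 e2) (hupsub j0 3 e0) (by decide)⟩),
            cardU2 (Finset.disjoint_singleton_left.2
                  (fun hm => lt_irrefl _ (hupmem j0 j0 hm).2)),
            Finset.card_singleton]
          rw [hcC2] at hC2
          omega
      · exact step5b (le_of_lt (Dd2 j2 j1 e2 e1))
  · -- Step 4 : β j1 = 3
    have hloC : ∀ t ∈ (Q 1 ∪ (Q 2 ∪ lows j1)),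
        f (mkProf P β vC) t < f (mkProf P β vC) j1 := by
      intro t ht
      rcases Finset.mem_union.1 ht with h | h
      · exact C1q t j1 (hβu t 1 h) (by rw [e1]; decide)
      rcases Finset.mem_union.1 h with h | h
      · exact Cc2 t j1 (hβu t 2 h) e1
      · exact CW t j1 (hlowmem j1 t h).1.symm (hlowmem j1 t h).2
    have hC1 := count_below (f (mkProf P β vC)) j1 _ hloC
    have hcC1 : (Q 1 ∪ (Q 2 ∪ lows j1)).card
        = (Q 1).card + ((Q 2).card + (lows j1).card) := by
      rw [cardU2 (Finset.disjoint_union_right.2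
            ⟨djQ (sQ 1) (sQ 2) (by decide), djQ (sQ 1) (hlowsub j1 3 e1) (by decide)⟩),
            cardU2 (djQ (sQ 2) (hlowsub j1 3 e1) (by decide))]
    rw [hcC1] at hC1
    have eCD := congrArg Fin.val ECD
    have hs1 := hsplit j1
    rw [e1] at hs1
    rcases hβj2 with e2 | e2
    · -- β j2 = 0 : cases 4b / 4c
      have hs2 := hsplit j2
      rw [e2] at hs2
      have step4b : f (mkProf P β vC) j0 ≤ f (mkProf P β vC) j1 → False := by
        intro hle
        have hlo2 : ∀ t ∈ (Q 0 ∪ (Q 1 ∪ (Q 2 ∪ lows j1))),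
            f (mkProf P β vC) t < f (mkProf P β vC) j1 := by
          intro t ht
          rcases Finset.mem_union.1 ht with h | h
          · exact lt_of_lt_of_le (F1 t h) hle
          · exact hloC t h
        have h2 := count_below (f (mkProf P β vC)) j1 _ hlo2
        have hc2 : (Q 0 ∪ (Q 1 ∪ (Q 2 ∪ lows j1))).card
            = (Q 0).card + ((Q 1).card + ((Q 2).card + (lows j1).card)) := by
          rw [cardU2 (Finset.disjoint_union_right.2
                ⟨djQ (sQ 0) (sQ 1) (by decide),
                 Finset.disjoint_union_right.2
                   ⟨djQ (sQ 0) (sQ 2) (by decide), djQ (sQ 0) (hlowsub j1 3 e1) (by decide)⟩⟩),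
            cardU2 (Finset.disjoint_union_right.2
                ⟨djQ (sQ 1) (sQ 2) (by decide), djQ (sQ 1) (hlowsub j1 3 e1) (by decide)⟩),
            cardU2 (djQ (sQ 2) (hlowsub j1 3 e1) (by decide))]
        rw [hc2] at h2
        have hup2 : ∀ t ∈ (ups j1 ∪ ({j2} ∪ ups j2)),
            f (mkProf P β vD) j1 < f (mkProf P β vD) t := by
          intro t ht
          rcases Finset.mem_union.1 ht with h | h
          · exact DW j1 t (hupmem j1 t h).1 (hupmem j1 t h).2
          rcases Finset.mem_union.1 h with h | h
          · rw [Finset.mem_singleton.1 h]; exact F2 j1 (e1 ▸ hβ j1)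
          · exact lt_trans (F2 j1 (e1 ▸ hβ j1))
              (DW j2 t (hupmem j2 t h).1 (hupmem j2 t h).2)
        have h3 := count_above (f (mkProf P β vD)) j1 _ hup2
        have hc3 : (ups j1 ∪ ({j2} ∪ ups j2)).card
            = (ups j1).card + (1 + (ups j2).card) := by
          rw [cardU2 (Finset.disjoint_union_right.2
                ⟨djQ (hupsub j1 3 e1) (hsing j2 0 e2) (by decide),
                 djQ (hupsub j1 3 e1) (hupsub j2 0 e2) (by decide)⟩),
            cardU2 (Finset.disjoint_singleton_left.2
                (fun hm => lt_irrefl _ (hupmem j2 j2 hm).2)),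
            Finset.card_singleton]
        rw [hc3] at h3
        omega
      rcases hβj0 with e0 | e0
      · exact step4b (le_of_lt (Cc2 j0 j1 e0 e1))
      · by_cases hv : (j0 : ℕ) ≤ (j1 : ℕ)
        · rcases Nat.eq_or_lt_of_le hv with heq | hlt
          · exact step4b (le_of_eq (by rw [show j0 = j1 from Fin.ext heq]))
          · exact step4b (le_of_lt (CW j0 j1 (e1.trans e0.symm) hlt))
        · -- case 4c : β j0 = 3, j1 < j0
          push_neg at hv
          have hs0 := hsplit j0
          rw [e0] at hs0
          have hloA : ∀ t ∈ (Q 0 ∪ (Q 1 ∪ (Q 2 ∪ lows j1))),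
              f (mkProf P β vA) t < f (mkProf P β vA) j1 := by
            intro t ht
            rcases Finset.mem_union.1 ht with h | h
            · exact ltA t j1 (by rw [e1, hβu t 0 h]; decide)
            rcases Finset.mem_union.1 h with h | h
            · exact ltA t j1 (by rw [e1, hβu t 1 h]; decide)
            rcases Finset.mem_union.1 h with h | h
            · exact ltA t j1 (by rw [e1, hβu t 2 h]; decide)
            · exact AW t j1 (hlowmem j1 t h).1.symm (hlowmem j1 t h).2
          have hA1 := count_below (f (mkProf P β vA)) j1 _ hloA
          have hcA1 : (Q 0 ∪ (Q 1 ∪ (Q 2 ∪ lows j1))).card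
              = (Q 0).card + ((Q 1).card + ((Q 2).card + (lows j1).card)) := by
            rw [cardU2 (Finset.disjoint_union_right.2
                  ⟨djQ (sQ 0) (sQ 1) (by decide),
                   Finset.disjoint_union_right.2
                     ⟨djQ (sQ 0) (sQ 2) (by decide), djQ (sQ 0) (hlowsub j1 3 e1) (by decide)⟩⟩),
            cardU2 (Finset.disjoint_union_right.2
                  ⟨djQ (sQ 1) (sQ 2) (by decide), djQ (sQ 1) (hlowsub j1 3 e1) (by decide)⟩),
            cardU2 (djQ (sQ 2) (hlowsub j1 3 e1) (by decide))]
          rw [hcA1] at hA1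
          have hA2 := count_above (f (mkProf P β vA)) j1 _
            (fun t ht => AW j1 t (hupmem j1 t ht).1 (hupmem j1 t ht).2)
          have eAE := congrArg Fin.val EAE
          have EupFact : ∀ t : Fin n, β t ≠ 3 → f (mkProf P β vE) t < f (mkProf P β vE) j1 := by
            intro t hbt
            by_contra hcon
            have hnet : t ≠ j1 := fun h => hbt (by rw [h, e1])
            have hgt : f (mkProf P β vE) j1 < f (mkProf P β vE) t :=
              lt_of_le_of_ne (not_lt.1 hcon)
                (fun h => hnet ((f (mkProf P β vE)).injective h.symm))
            have hup : ∀ u ∈ ({t} ∪ ups j1),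
                f (mkProf P β vE) j1 < f (mkProf P β vE) u := by
              intro u hu
              rcases Finset.mem_union.1 hu with h | h
              · rw [Finset.mem_singleton.1 h]; exact hgt
              · exact EW3 j1 u e1 ((hupmem j1 u h).1.trans e1) (hupmem j1 u h).2
            have hE := count_above (f (mkProf P β vE)) j1 _ hup
            have hcE : ({t} ∪ ups j1).card = 1 + (ups j1).card := by
              rw [cardU2 (Finset.disjoint_singleton_left.2
                    (fun hm => hbt ((hupmem j1 t hm).1.trans e1))),
            Finset.card_singleton]
            rw [hcE] at hE
            omega
          have hj1j0E : f (mkProf P β vE) j1 < f (mkProf P β vE) j0 := EW3 j1 j0 e1 e0 hv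
          have hloE : ∀ t ∈ (Q 0 ∪ (Q 1 ∪ (Q 2 ∪ lows j0))),
              f (mkProf P β vE) t < f (mkProf P β vE) j0 := by
            intro t ht
            rcases Finset.mem_union.1 ht with h | h
            · exact lt_trans (EupFact t (by rw [hβu t 0 h]; decide)) hj1j0E
            rcases Finset.mem_union.1 h with h | h
            · exact lt_trans (EupFact t (by rw [hβu t 1 h]; decide)) hj1j0E
            rcases Finset.mem_union.1 h with h | h
            · exact lt_trans (EupFact t (by rw [hβu t 2 h]; decide)) hj1j0E
            · exact EW3 t j0 ((hlowmem j0 t h).1.trans e0) e0 (hlowmem j0 t h).2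
          have hE2 := count_below (f (mkProf P β vE)) j0 _ hloE
          have hcE2 : (Q 0 ∪ (Q 1 ∪ (Q 2 ∪ lows j0))).card
              = (Q 0).card + ((Q 1).card + ((Q 2).card + (lows j0).card)) := by
            rw [cardU2 (Finset.disjoint_union_right.2
                  ⟨djQ (sQ 0) (sQ 1) (by decide),
                   Finset.disjoint_union_right.2
                     ⟨djQ (sQ 0) (sQ 2) (by decide), djQ (sQ 0) (hlowsub j0 3 e0) (by decide)⟩⟩),
            cardU2 (Finset.disjoint_union_right.2
                  ⟨djQ (sQ 1) (sQ 2) (by decide), djQ (sQ 1) (hlowsub j0 3 e0) (by decide)⟩),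
            cardU2 (djQ (sQ 2) (hlowsub j0 3 e0) (by decide))]
          rw [hcE2] at hE2
          have eED := congrArg Fin.val EED
          have hupD : ∀ t ∈ (ups j0 ∪ ({j2} ∪ ups j2)),
              f (mkProf P β vD) j0 < f (mkProf P β vD) t := by
            intro t ht
            rcases Finset.mem_union.1 ht with h | h
            · exact DW j0 t (hupmem j0 t h).1 (hupmem j0 t h).2
            rcases Finset.mem_union.1 h with h | h
            · rw [Finset.mem_singleton.1 h]; exact F2 j0 (e0 ▸ hβ j0)
            · exact lt_trans (F2 j0 (e0 ▸ hβ j0))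
                (DW j2 t (hupmem j2 t h).1 (hupmem j2 t h).2)
          have hD := count_above (f (mkProf P β vD)) j0 _ hupD
          have hcD : (ups j0 ∪ ({j2} ∪ ups j2)).card
              = (ups j0).card + (1 + (ups j2).card) := by
            rw [cardU2 (Finset.disjoint_union_right.2
                  ⟨djQ (hupsub j0 3 e0) (hsing j2 0 e2) (by decide),
                   djQ (hupsub j0 3 e0) (hupsub j2 0 e2) (by decide)⟩),
            cardU2 (Finset.disjoint_singleton_left.2
                  (fun hm => lt_irrefl _ (hupmem j2 j2 hm).2)),
            Finset.card_singleton]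
          rw [hcD] at hD
          omega
    · -- β j2 = 1 : case 4a
      have hs2 := hsplit j2
      rw [e2] at hs2
      have hup : ∀ t ∈ (ups j1 ∪ ({j2} ∪ (Q 0 ∪ ups j2))),
          f (mkProf P β vD) j1 < f (mkProf P β vD) t := by
        intro t ht
        rcases Finset.mem_union.1 ht with h | h
        · exact DW j1 t (hupmem j1 t h).1 (hupmem j1 t h).2
        rcases Finset.mem_union.1 h with h | h
        · rw [Finset.mem_singleton.1 h]; exact F2 j1 (e1 ▸ hβ j1)
        rcases Finset.mem_union.1 h with h | h
        · exact lt_trans (F2 j1 (e1 ▸ hβ j1)) (Dd2 j2 t e2 (hβu t 0 h))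
        · exact lt_trans (F2 j1 (e1 ▸ hβ j1))
            (DW j2 t (hupmem j2 t h).1 (hupmem j2 t h).2)
      have h3 := count_above (f (mkProf P β vD)) j1 _ hup
      have hc3 : (ups j1 ∪ ({j2} ∪ (Q 0 ∪ ups j2))).card
          = (ups j1).card + (1 + ((Q 0).card + (ups j2).card)) := by
        rw [cardU2 (Finset.disjoint_union_right.2
              ⟨djQ (hupsub j1 3 e1) (hsing j2 1 e2) (by decide),
               Finset.disjoint_union_right.2
                 ⟨djQ (hupsub j1 3 e1) (sQ 0) (by decide),
                  djQ (hupsub j1 3 e1) (hupsub j2 1 e2) (by decide)⟩⟩),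
            cardU2 (Finset.disjoint_union_right.2
              ⟨Finset.disjoint_singleton_left.2
                (fun hm => absurd (hβu j2 0 hm) (by rw [e2]; decide)),
               Finset.disjoint_singleton_left.2
                (fun hm => lt_irrefl _ (hupmem j2 j2 hm).2)⟩),
            cardU2 (djQ (sQ 0) (hupsub j2 1 e2) (by decide)),
            Finset.card_singleton]
      rw [hc3] at h3
      omega
end NoGuWsp

/-- with `n ≥ 4` papers partitioned into four disjoint nonempty
blocks `Q 0, Q 1, Q 2, Q 3`, and three reviewers reviewing `Q 0 ∪ Q 1`,
`Q 1 ∪ Q 2` and `Q 2 ∪ Q 3` respectively, no aggregation rule is both group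
unanimous and weakly strategyproof. -/
theorem no_gu_wsp_chain {n : ℕ} (hn : 4 ≤ n) (Q : Fin 4 → Finset (Fin n))
    (hne : ∀ a, (Q a).Nonempty)
    (hdisj : ∀ a b, a ≠ b → Disjoint (Q a) (Q b))
    (hcover : Finset.univ.biUnion Q = Finset.univ) :
    ¬ ∃ f : Profile 3 n ![Q 0 ∪ Q 1, Q 1 ∪ Q 2, Q 2 ∪ Q 3] → Equiv.Perm (Fin n),
        GroupUnanimous _ f ∧ WeaklyStrategyproof _ f := by
  rintro ⟨f, hGU, hWSP⟩
  exact NoGuWsp.main Q hne hdisj hcover _ (by intro i; fin_cases i <;> rfl) f hGU hWSP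
end

section
/- Suppose n ≥ 2 papers, and every reviewer reviews all n papers (each reviewer submits a total ranking of all papers). Then there is no aggregation rule f that is both pairwise unanimous and weakly strategyproof. -/
/-- In the total-ranking setting, each reviewer submits a permutation of the
`n` papers (paper ↦ position).  Pairwise unanimity: if every reviewer ranks
`p` above `q`, then so does the aggregate ranking. -/
def PairwiseUnanimousTotal {m n : ℕ}
    (f : (Fin m → Equiv.Perm (Fin n)) → Equiv.Perm (Fin n)) : Prop :=
  ∀ (π : Fin m → Equiv.Perm (Fin n)) (p q : Fin n),
    (∀ i, π i p < π i q) → f π p < f π q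

/-- Weak strategyproofness in the total-ranking setting. -/
def WeaklyStrategyproofTotal {m n : ℕ}
    (f : (Fin m → Equiv.Perm (Fin n)) → Equiv.Perm (Fin n)) : Prop :=
  ∀ i : Fin m, ∃ j : Fin n, ∀ π π' : Fin m → Equiv.Perm (Fin n),
    (∀ i', i' ≠ i → π i' = π' i') → f π j = f π' j

/-- with `n ≥ 2` papers, when every reviewer ranks all papers,
no aggregation rule is both pairwise unanimous and weakly strategyproof. -/
theorem no_pu_wsp_total {m n : ℕ} (hn : 2 ≤ n) :
    ¬ ∃ f : (Fin m → Equiv.Perm (Fin n)) → Equiv.Perm (Fin n),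
        PairwiseUnanimousTotal f ∧ WeaklyStrategyproofTotal f := by
  rintro ⟨f, hPU, hWSP⟩
  obtain ⟨k, rfl⟩ : ∃ k, n = k + 2 := ⟨n - 2, by omega⟩
  clear hn
  choose j hj using hWSP
  set L : Fin (k+2) := Fin.last (k+1) with hLdef
  have hLval : (L : ℕ) = k + 1 := rfl
  set P : Finset (Fin m) → (Fin m → Equiv.Perm (Fin (k+2))) :=
    fun S i => if i ∈ S then finRotate (k+2) else 1 with hP
  -- value of the rotation on non-last elements
  have hBlt : ∀ x : Fin (k+2), (x : ℕ) < k + 1 →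
      ((finRotate (k+2) x : ℕ) = (x : ℕ) + 1) := by
    intro x hx
    rw [finRotate_succ_apply, Fin.val_add_one_of_lt]
    exact Fin.lt_def.mpr (by simpa [hLval] using hx)
  have hBlast : finRotate (k+2) L = 0 := by
    rw [finRotate_succ_apply]; exact Fin.last_add_one (k+1)
  -- monotonicity of f (P S) on non-last papers
  have M : ∀ (S : Finset (Fin m)) (x y : Fin (k+2)), (x : ℕ) < (y : ℕ) →
      (y : ℕ) < k + 1 → f (P S) x < f (P S) y := by
    intro S x y hxy hy
    apply hPU
    intro i
    by_cases hi : i ∈ S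
    · simp only [hP, if_pos hi]
      exact Fin.lt_def.mpr (by rw [hBlt x (lt_trans hxy hy), hBlt y hy]; omega)
    · simp only [hP, if_neg hi, Equiv.Perm.one_apply]
      exact Fin.lt_def.mpr hxy
  -- lower bound on positions
  have A : ∀ (S : Finset (Fin m)) (x : Fin (k+2)), (x : ℕ) < k + 1 →
      (x : ℕ) ≤ (f (P S) x : ℕ) := by
    intro S x
    obtain ⟨v, hv⟩ := x
    revert hv
    induction v with
    | zero => intro hv _; exact Nat.zero_le _
    | succ w ih =>
      intro hv hlt
      have hlt' : w + 1 < k + 1 := hlt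
      have hw2 : w < k + 2 := by omega
      have h1 : w ≤ (f (P S) ⟨w, hw2⟩ : ℕ) := ih hw2 (show w < k + 1 by omega)
      have h2 := M S ⟨w, hw2⟩ ⟨w+1, hv⟩ (show w < w + 1 by omega) hlt'
      have h3 : (f (P S) ⟨w, hw2⟩ : ℕ) < (f (P S) ⟨w+1, hv⟩ : ℕ) := Fin.lt_def.mp h2
      show w + 1 ≤ (f (P S) ⟨w+1, hv⟩ : ℕ)
      omega
  -- upper bound on positions
  have A'aux : ∀ (S : Finset (Fin m)) (d v : ℕ), v + d = k → ∀ (hv : v < k + 2),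
      (f (P S) ⟨v, hv⟩ : ℕ) ≤ v + 1 := by
    intro S d
    induction d with
    | zero =>
      intro v h hv
      have := (f (P S) ⟨v, hv⟩).is_lt
      omega
    | succ e ih =>
      intro v h hv
      have hv1 : v + 1 < k + 2 := by omega
      have h1 : (f (P S) ⟨v+1, hv1⟩ : ℕ) ≤ v + 2 := ih (v+1) (by omega) hv1
      have h2 := M S ⟨v, hv⟩ ⟨v+1, hv1⟩ (show v < v + 1 by omega) (show v + 1 < k + 1 by omega)
      have h3 : (f (P S) ⟨v, hv⟩ : ℕ) < (f (P S) ⟨v+1, hv1⟩ : ℕ) := Fin.lt_def.mp h2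
      omega
  have A' : ∀ (S : Finset (Fin m)) (x : Fin (k+2)), (x : ℕ) < k + 1 →
      (f (P S) x : ℕ) ≤ (x : ℕ) + 1 := by
    intro S x hx
    obtain ⟨v, hv⟩ := x
    have hx' : v < k + 1 := hx
    exact A'aux S (k - v) v (by omega) hv
  -- upward propagation of the "shifted" regime
  have Daux : ∀ (S : Finset (Fin m)) (d : ℕ) (x y : Fin (k+2)), (y : ℕ) = (x : ℕ) + d →
      (y : ℕ) < k + 1 → (f (P S) x : ℕ) = (x : ℕ) + 1 → (f (P S) y : ℕ) = (y : ℕ) + 1 := by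
    intro S d
    induction d with
    | zero =>
      intro x y hxy hy hx
      have hxe : x = y := Fin.ext (by omega)
      rw [← hxe]
      omega
    | succ e ih =>
      intro x y hxy hy hx
      have hz2 : (y : ℕ) - 1 < k + 2 := by omega
      have h1 : (f (P S) ⟨(y:ℕ) - 1, hz2⟩ : ℕ) = ((y:ℕ) - 1) + 1 :=
        ih x ⟨(y:ℕ) - 1, hz2⟩ (show (y:ℕ) - 1 = (x:ℕ) + e by omega)
          (show (y:ℕ) - 1 < k + 1 by omega) hx
      have h2 := M S ⟨(y:ℕ) - 1, hz2⟩ y (show (y:ℕ) - 1 < (y:ℕ) by omega) hy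
      have h3 : (f (P S) ⟨(y:ℕ) - 1, hz2⟩ : ℕ) < (f (P S) y : ℕ) := Fin.lt_def.mp h2
      have h4 := A' S y hy
      omega
  have D : ∀ (S : Finset (Fin m)) (x y : Fin (k+2)), (x : ℕ) ≤ (y : ℕ) →
      (y : ℕ) < k + 1 → (f (P S) x : ℕ) = (x : ℕ) + 1 → (f (P S) y : ℕ) = (y : ℕ) + 1 :=
    fun S x y hxy hy hx => Daux S ((y:ℕ) - (x:ℕ)) x y (by omega) hy hx
  -- key position lemmas
  have L2 : ∀ (S : Finset (Fin m)) (x : Fin (k+2)), (x : ℕ) < k + 1 →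
      (f (P S) L : ℕ) ≤ (x : ℕ) → (f (P S) x : ℕ) = (x : ℕ) + 1 := by
    intro S x hx1 hx2
    have h1 := A S x hx1
    have h2 := A' S x hx1
    by_cases hcase : (f (P S) x : ℕ) = (x : ℕ) + 1
    · exact hcase
    exfalso
    have hval : (f (P S) x : ℕ) = (x : ℕ) := by omega
    have hne : (f (P S) L : ℕ) ≠ (x : ℕ) := by
      intro hc
      have he : f (P S) L = f (P S) x := Fin.ext (by omega)
      have hLx : L = x := (f (P S)).injective he
      rw [← hLx, hLval] at hx1
      omega
    have hθlt : (f (P S) L : ℕ) < (x : ℕ) := by omega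
    have hy2 : (f (P S) L : ℕ) < k + 2 := (f (P S) L).is_lt
    set y : Fin (k+2) := ⟨(f (P S) L : ℕ), hy2⟩ with hydef
    have hyval : (y : ℕ) = (f (P S) L : ℕ) := rfl
    have hylt : (y : ℕ) < k + 1 := by omega
    have hA := A S y hylt
    have hA' := A' S y hylt
    have hyne : (f (P S) y : ℕ) ≠ (y : ℕ) := by
      intro hc
      have he : f (P S) L = f (P S) y := Fin.ext (by omega)
      have hLy : L = y := (f (P S)).injective he
      have := congrArg Fin.val hLy
      rw [hLval] at this
      omega
    have hy1 : (f (P S) y : ℕ) = (y : ℕ) + 1 := by omega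
    have hD := D S y x (by omega) hx1 hy1
    omega
  have L1 : ∀ (S : Finset (Fin m)) (x : Fin (k+2)), (x : ℕ) < k + 1 →
      (x : ℕ) < (f (P S) L : ℕ) → (f (P S) x : ℕ) = (x : ℕ) := by
    intro S x hx1 hx2
    have h1 := A S x hx1
    have h2 := A' S x hx1
    by_cases hcase : (f (P S) x : ℕ) = (x : ℕ)
    · exact hcase
    exfalso
    have hval : (f (P S) x : ℕ) = (x : ℕ) + 1 := by omega
    have hub : (f (P S) L : ℕ) ≤ k + 1 := by
      have := (f (P S) L).is_lt
      omega
    have hy2 : (f (P S) L : ℕ) - 1 < k + 2 := by omega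
    set y : Fin (k+2) := ⟨(f (P S) L : ℕ) - 1, hy2⟩ with hydef
    have hyval : (y : ℕ) = (f (P S) L : ℕ) - 1 := rfl
    have hylt : (y : ℕ) < k + 1 := by omega
    have hD := D S x y (by omega) hylt hval
    have he : f (P S) y = f (P S) L := Fin.ext (by omega)
    have hyL : y = L := (f (P S)).injective he
    have := congrArg Fin.val hyL
    rw [hLval] at this
    omega
  -- endpoint: empty coalition, everyone plays the identity
  have hempty : (f (P ∅) L : ℕ) = k + 1 := by
    set w : Fin (k+2) := (f (P ∅)).symm L with hwdef
    have hw : f (P ∅) w = L := (f (P ∅)).apply_symm_apply L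
    by_cases hwL : w = L
    · rw [hwL] at hw
      rw [hw, hLval]
    · exfalso
      have hwval : (w : ℕ) < k + 1 := by
        have h1 := w.is_lt
        have h2 : (w : ℕ) ≠ k + 1 := fun hc => hwL (Fin.ext (by rw [hc, hLval]))
        omega
      have hlt := hPU (P ∅) w L (by
        intro i
        simp only [hP]
        rw [if_neg (Finset.notMem_empty i)]
        simp only [Equiv.Perm.one_apply]
        exact Fin.lt_def.mpr (by rw [hLval]; exact hwval))
      rw [hw] at hlt
      have h3 := Fin.lt_def.mp hlt
      have h4 := (f (P ∅) L).is_lt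
      rw [hLval] at h3
      omega
  -- endpoint: full coalition, everyone plays the rotation
  have huniv : (f (P Finset.univ) L : ℕ) = 0 := by
    set w : Fin (k+2) := (f (P Finset.univ)).symm 0 with hwdef
    have hw : f (P Finset.univ) w = 0 := (f (P Finset.univ)).apply_symm_apply 0
    by_cases hwL : w = L
    · rw [hwL] at hw
      rw [hw, Fin.val_zero]
    · exfalso
      have hwval : (w : ℕ) < k + 1 := by
        have h1 := w.is_lt
        have h2 : (w : ℕ) ≠ k + 1 := fun hc => hwL (Fin.ext (by rw [hc, hLval]))
        omega
      have hlt := hPU (P Finset.univ) L w (by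
        intro i
        simp only [hP]
        rw [if_pos (Finset.mem_univ i)]
        rw [hBlast]
        refine Fin.lt_def.mpr ?_
        rw [hBlt w hwval, Fin.val_zero]
        omega)
      rw [hw] at hlt
      have h3 := Fin.lt_def.mp hlt
      rw [Fin.val_zero] at h3
      omega
  -- single-reviewer invariance
  have hflip : ∀ (a : Fin m) (S T : Finset (Fin m)),
      (∀ i, i ≠ a → (i ∈ S ↔ i ∈ T)) → f (P S) (j a) = f (P T) (j a) := by
    intro a S T h
    apply hj a
    intro i hi
    simp only [hP]
    exact if_congr (h i hi) rfl rfl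
  -- group invariance
  have hgroup : ∀ (x : Fin (k+2)) (E S : Finset (Fin m)), (∀ i ∈ E, j i = x) →
      f (P (S ∪ E)) x = f (P S) x := by
    intro x E
    induction E using Finset.induction_on with
    | empty => intro S _; rw [Finset.union_empty]
    | @insert a E' ha ih =>
      intro S hE
      have h1 : S ∪ insert a E' = insert a (S ∪ E') := Finset.union_insert a S E'
      have hja : j a = x := hE a (Finset.mem_insert_self a E')
      have h2 : f (P (insert a (S ∪ E'))) (j a) = f (P (S ∪ E')) (j a) := by
        apply hflip
        intro i hi
        simp [Finset.mem_insert, hi]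
      rw [h1, ← hja, h2, hja]
      exact ih S (fun i hiE => hE i (Finset.mem_insert_of_mem hiE))
  -- descending filter sets
  set T : ℕ → Finset (Fin m) := fun v => Finset.univ.filter (fun i => v < (j i : ℕ)) with hT
  -- main diagonalization
  have Q : ∀ v : ℕ, v ≤ k → (f (P (T v)) L : ℕ) ≤ v := by
    intro v
    induction v with
    | zero =>
      intro _
      by_contra hc
      push_neg at hc
      have hx2 : (0 : ℕ) < k + 2 := by omega
      set x : Fin (k+2) := ⟨0, hx2⟩ with hxdef
      have hxval : (x : ℕ) = 0 := rfl
      have h1 : (f (P (T 0)) x : ℕ) = (x : ℕ) :=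
        L1 (T 0) x (show (x:ℕ) < k + 1 by omega) (show (x:ℕ) < (f (P (T 0)) L : ℕ) by omega)
      have h2 : T 0 ∪ Finset.univ.filter (fun i => (j i : ℕ) = 0) = Finset.univ := by
        ext i
        simp only [hT, Finset.mem_union, Finset.mem_filter, Finset.mem_univ, true_and, iff_true]
        omega
      have h3 := hgroup x (Finset.univ.filter (fun i => (j i : ℕ) = 0)) (T 0) (by
        intro i hi
        rw [Finset.mem_filter] at hi
        exact Fin.ext hi.2)
      rw [h2] at h3
      have h4 : (f (P Finset.univ) x : ℕ) = (x : ℕ) + 1 :=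
        L2 Finset.univ x (show (x:ℕ) < k + 1 by omega)
          (show (f (P Finset.univ) L : ℕ) ≤ (x : ℕ) by omega)
      have h5 : (f (P Finset.univ) x : ℕ) = (f (P (T 0)) x : ℕ) := congrArg Fin.val h3
      omega
    | succ v ih =>
      intro hv
      by_contra hc
      push_neg at hc
      have hx2 : v + 1 < k + 2 := by omega
      set x : Fin (k+2) := ⟨v + 1, hx2⟩ with hxdef
      have hxval : (x : ℕ) = v + 1 := rfl
      have h1 : (f (P (T (v+1))) x : ℕ) = (x : ℕ) :=
        L1 (T (v+1)) x (show (x:ℕ) < k + 1 by omega)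
          (show (x:ℕ) < (f (P (T (v+1))) L : ℕ) by omega)
      have h2 : T (v+1) ∪ Finset.univ.filter (fun i => (j i : ℕ) = v + 1) = T v := by
        ext i
        simp [hT]
        omega
      have h3 := hgroup x (Finset.univ.filter (fun i => (j i : ℕ) = v + 1)) (T (v+1)) (by
        intro i hi
        rw [Finset.mem_filter] at hi
        exact Fin.ext hi.2)
      rw [h2] at h3
      have hihv : (f (P (T v)) L : ℕ) ≤ v := ih (by omega)
      have h4 : (f (P (T v)) x : ℕ) = (x : ℕ) + 1 :=
        L2 (T v) x (show (x:ℕ) < k + 1 by omega)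
          (show (f (P (T v)) L : ℕ) ≤ (x : ℕ) by omega)
      have h5 : (f (P (T v)) x : ℕ) = (f (P (T (v+1))) x : ℕ) := congrArg Fin.val h3
      omega
  -- final contradiction
  have hfin := Q k le_rfl
  have hTk : f (P (T k)) L = f (P ∅) L := by
    have h1 : (∅ : Finset (Fin m)) ∪ T k = T k := by simp
    have h2 := hgroup L (T k) ∅ (by
      intro i hi
      rw [hT] at hi
      rw [Finset.mem_filter] at hi
      have := (j i).is_lt
      exact Fin.ext (by rw [hLval]; omega))
    rw [h1] at h2
    exact h2
  rw [hTk, hempty] at hfin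
  omega
end

section
/- Diagonalization lemma: In the total-ranking setting, partition the reviewers into groups R'_1,...,R'_{m'} so that no reviewer in group R'_k can influence paper e_k (in the influence graph of f). Let π = e_1 ≻ e_2 ≻ ... ≻ e_{m'} and π' = e_2 ≻ e_3 ≻ ... ≻ e_{m'} ≻ e_1 (restricted to papers e_1,...,e_{m'}, with all other papers below). Define profiles π_k in which the first k groups report π' and the remaining groups report π. If f is pairwise unanimous and weakly strategyproof, then for every k ∈ {1,...,m'}, paper e_k occupies position k in the output f(π_k). -/
/-- Counting: if every element of `S` is mapped strictly above `ρ x`, then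
`S.card + ρ x + 1 ≤ n`. -/
lemma aux_count_above {n : ℕ} (ρ : Equiv.Perm (Fin n)) (x : Fin n)
    (S : Finset (Fin n)) (hS : ∀ q ∈ S, (ρ x : ℕ) < (ρ q : ℕ)) :
    S.card + (ρ x : ℕ) + 1 ≤ n := by
  have hsub : S.image ρ ⊆ Finset.Ioi (ρ x) := by
    intro y hy
    obtain ⟨q, hq, rfl⟩ := Finset.mem_image.mp hy
    exact Finset.mem_Ioi.mpr (Fin.lt_def.mpr (hS q hq))
  have h1 := Finset.card_le_card hsub
  rw [Finset.card_image_of_injective _ ρ.injective, Fin.card_Ioi] at h1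
  have h2 : (ρ x : ℕ) < n := (ρ x).isLt
  omega

/-- Counting: if every element of `S` is mapped strictly below `ρ x`, then
`S.card ≤ ρ x`. -/
lemma aux_count_below {n : ℕ} (ρ : Equiv.Perm (Fin n)) (x : Fin n)
    (S : Finset (Fin n)) (hS : ∀ q ∈ S, (ρ q : ℕ) < (ρ x : ℕ)) :
    S.card ≤ (ρ x : ℕ) := by
  have hsub : S.image ρ ⊆ Finset.Iio (ρ x) := by
    intro y hy
    obtain ⟨q, hq, rfl⟩ := Finset.mem_image.mp hy
    exact Finset.mem_Iio.mpr (Fin.lt_def.mpr (hS q hq))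
  have h1 := Finset.card_le_card hsub
  rwa [Finset.card_image_of_injective _ ρ.injective, Fin.card_Iio] at h1

/-- If two profiles differ only at reviewers of group `c`, none of whom can
influence paper `e c`, then the output position of `e c` is the same. -/
lemma aux_many_infl {m n m' : ℕ}
    (f : (Fin m → Equiv.Perm (Fin n)) → Equiv.Perm (Fin n))
    (e : Fin m' → Fin n) (g : Fin m → Fin m')
    (hinfl : ∀ (i : Fin m) (π π' : Fin m → Equiv.Perm (Fin n)),
      (∀ i', i' ≠ i → π i' = π' i') → f π (e (g i)) = f π' (e (g i)))
    (c : Fin m') (π π' : Fin m → Equiv.Perm (Fin n))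
    (h : ∀ i, π i ≠ π' i → g i = c) : f π (e c) = f π' (e c) := by
  suffices H : ∀ N (π : Fin m → Equiv.Perm (Fin n)),
      (Finset.univ.filter (fun i => π i ≠ π' i)).card ≤ N →
      (∀ i, π i ≠ π' i → g i = c) → f π (e c) = f π' (e c) from
    H _ π le_rfl h
  intro N
  induction N with
  | zero =>
    intro π hcard _
    have hall : ∀ i, π i = π' i := by
      intro i
      by_contra hne
      have hi : i ∈ Finset.univ.filter (fun i => π i ≠ π' i) := by
        simp [hne]
      have := Finset.card_pos.mpr ⟨i, hi⟩
      omega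
    rw [funext hall]
  | succ N ihN =>
    intro π hcard hg
    by_cases hall : ∀ i, π i = π' i
    · rw [funext hall]
    push_neg at hall
    obtain ⟨i, hi⟩ := hall
    have hgi : g i = c := hg i hi
    have h1 : f π (e c) = f (Function.update π i (π' i)) (e c) := by
      rw [← hgi]
      exact hinfl i π (Function.update π i (π' i))
        (fun i' hne => (Function.update_of_ne hne _ _).symm)
    rw [h1]
    apply ihN
    · have hsub : Finset.univ.filter
          (fun i' => Function.update π i (π' i) i' ≠ π' i')
          ⊆ (Finset.univ.filter (fun i' => π i' ≠ π' i')).erase i := by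
        intro i' hi'
        simp only [Finset.mem_filter, Finset.mem_univ, true_and] at hi'
        by_cases hii : i' = i
        · subst hii; simp at hi'
        · rw [Function.update_of_ne hii] at hi'
          exact Finset.mem_erase.mpr ⟨hii, by simp [hi']⟩
      have h2 := Finset.card_le_card hsub
      have h3 : i ∈ Finset.univ.filter (fun i' => π i' ≠ π' i') := by simp [hi]
      rw [Finset.card_erase_of_mem h3] at h2
      have h4 := Finset.card_pos.mpr ⟨i, h3⟩
      omega
    · intro i' hne
      by_cases hii : i' = i
      · subst hii; simp at hne
      · rw [Function.update_of_ne hii] at hne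
        exact hg i' hne

/-- diagonalization lemma.  `e 0, …, e (m'-1)` are distinct
papers; `g` assigns each reviewer a group index, and no reviewer in group `k`
can influence the output position of `e k`.  `σ` is the ranking
`e 0 ≻ e 1 ≻ ⋯ ≻ e (m'-1)` (all other papers below), and `τ` the rotated
ranking `e 1 ≻ e 2 ≻ ⋯ ≻ e (m'-1) ≻ e 0` (all other papers below).  In the
profile where the first `k+1` groups report `τ` and the rest report `σ`, if
`f` is pairwise unanimous and weakly strategyproof, paper `e k` occupies
position `k` in the output. -/
theorem diagonalization_lemma {m n m' : ℕ} (hm' : 2 ≤ m') (hm'n : m' ≤ n)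
    (f : (Fin m → Equiv.Perm (Fin n)) → Equiv.Perm (Fin n))
    (hpu : PairwiseUnanimousTotal f) (hwsp : WeaklyStrategyproofTotal f)
    (e : Fin m' → Fin n) (he : Function.Injective e)
    (g : Fin m → Fin m')
    (hinfl : ∀ (i : Fin m) (π π' : Fin m → Equiv.Perm (Fin n)),
      (∀ i', i' ≠ i → π i' = π' i') → f π (e (g i)) = f π' (e (g i)))
    (σ τ : Equiv.Perm (Fin n))
    (hσ : ∀ j : Fin m', (σ (e j) : ℕ) = (j : ℕ))
    (hσ' : ∀ p : Fin n, (∀ j, p ≠ e j) → m' ≤ (σ p : ℕ))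
    (hτ : ∀ j : Fin m', (τ (e j) : ℕ) = ((j : ℕ) + m' - 1) % m')
    (hτ' : ∀ p : Fin n, (∀ j, p ≠ e j) → m' ≤ (τ p : ℕ)) :
    ∀ k : Fin m',
      (f (fun i => if (g i : ℕ) < (k : ℕ) + 1 then τ else σ) (e k) : ℕ)
        = (k : ℕ) := by
  have hm0 : 0 < m' := by omega
  have npos : 0 < n := by omega
  -- values of τ on the special papers
  have hτval : ∀ j : Fin m', 1 ≤ (j : ℕ) → (τ (e j) : ℕ) = (j : ℕ) - 1 := by
    intro j hj
    rw [hτ]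
    have hjlt := j.isLt
    have h1 : (j : ℕ) + m' - 1 = ((j : ℕ) - 1) + m' := by omega
    rw [h1, Nat.add_mod_right, Nat.mod_eq_of_lt (by omega)]
  have hτ0 : ∀ (h0 : (0:ℕ) < m'), (τ (e ⟨0, h0⟩) : ℕ) = m' - 1 := by
    intro h0
    rw [hτ]
    simp only []
    have : (0 : ℕ) + m' - 1 = m' - 1 := by omega
    rw [this, Nat.mod_eq_of_lt (by omega)]
  -- embedding of indices
  set E : ℕ → Fin n := fun j => e ⟨j % m', Nat.mod_lt j hm0⟩ with hE
  have hEeq : ∀ (j : ℕ) (hj : j < m'), E j = e ⟨j, hj⟩ := by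
    intro j hj
    simp only [hE]
    congr 1
    exact Fin.ext (Nat.mod_eq_of_lt hj)
  have hEinj : ∀ a b : ℕ, a < m' → b < m' → E a = E b → a = b := by
    intro a b ha hb hab
    rw [hEeq a ha, hEeq b hb] at hab
    have := he hab
    exact congrArg Fin.val this
  have hσE : ∀ (j : ℕ), j < m' → (σ (E j) : ℕ) = j := by
    intro j hj; rw [hEeq j hj, hσ]
  have hτE : ∀ (j : ℕ), 1 ≤ j → j < m' → (τ (E j) : ℕ) = j - 1 := by
    intro j h1 hj; rw [hEeq j hj]; exact hτval ⟨j, hj⟩ h1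
  -- main induction on the group index
  have key : ∀ N (hN : N < m'),
      (f (fun i => if (g i : ℕ) < N + 1 then τ else σ) (e ⟨N, hN⟩) : ℕ) = N := by
    intro N
    induction N with
    | zero =>
      intro hN
      -- step 1: on the all-σ profile, e 0 is ranked first
      have h0 : ∀ q : Fin n, q ≠ e ⟨0, hN⟩ →
          f (fun _ => σ) (e ⟨0, hN⟩) < f (fun _ => σ) q := by
        intro q hq
        apply hpu
        intro i
        rw [Fin.lt_def, hσ]
        simp only [Fin.val_zero]
        rcases Nat.eq_zero_or_pos (σ q : ℕ) with h | h
        · exfalso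
          apply hq
          apply σ.injective
          apply Fin.ext
          rw [h, hσ]
        · exact h
      have hzero : (f (fun _ => σ) (e ⟨0, hN⟩) : ℕ) = 0 := by
        by_cases hq : (f (fun _ => σ)).symm ⟨0, npos⟩ = e ⟨0, hN⟩
        · have : f (fun _ => σ) (e ⟨0, hN⟩) = ⟨0, npos⟩ := by
            rw [← hq]; exact Equiv.apply_symm_apply _ _
          rw [this]
        · have h1 := h0 _ hq
          rw [Equiv.apply_symm_apply] at h1
          have := Fin.lt_def.mp h1
          simp at this
      -- step 2: move all group-0 reviewers from σ to τ
      have h2 : f (fun i => if (g i : ℕ) < 0 + 1 then τ else σ) (e ⟨0, hN⟩)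
          = f (fun _ => σ) (e ⟨0, hN⟩) := by
        apply aux_many_infl f e g hinfl ⟨0, hN⟩
        intro i hi
        by_cases hc : (g i : ℕ) < 0 + 1
        · refine Fin.ext ?_
          show (g i : ℕ) = 0
          omega
        · simp [hc] at hi
      rw [h2, hzero]
    | succ k ihk =>
      intro hN
      have hk : k < m' := by omega
      have vk := ihk hk
      set ψ : Fin m → Equiv.Perm (Fin n) :=
        fun i => if (g i : ℕ) < k + 1 then τ else σ with hψ
      set ρ := f ψ with hρ
      set x : Fin n := e ⟨k + 1, hN⟩ with hx
      -- unanimity transfer for profile ψ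
      have huna : ∀ p q : Fin n, (σ p : ℕ) < (σ q : ℕ) → (τ p : ℕ) < (τ q : ℕ) →
          ρ p < ρ q := by
        intro p q h1 h2
        apply hpu
        intro i
        simp only [hψ]
        split <;> exact Fin.lt_def.mpr (by assumption)
      have hσx : (σ x : ℕ) = k + 1 := hσ _
      have hτx : (τ x : ℕ) = k := by
        rw [hx]; rw [hτval ⟨k+1, hN⟩ (by simp)]
        show k + 1 - 1 = k
        omega
      -- lower bound: the papers e 1, …, e k are unanimously above x
      have hlow : k ≤ (ρ x : ℕ) := by
        have := aux_count_below ρ x ((Finset.Ico 1 (k+1)).image E) ?_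
        · rwa [Finset.card_image_of_injOn, Nat.card_Ico] at this
          intro a ha b hb hab
          rw [Finset.mem_coe, Finset.mem_Ico] at ha hb
          exact hEinj a b (by omega) (by omega) hab
        · intro q hq
          obtain ⟨j, hj, rfl⟩ := Finset.mem_image.mp hq
          rw [Finset.mem_Ico] at hj
          have hjm : j < m' := by omega
          have := huna (E j) x (by rw [hσE j hjm, hσx]; omega)
            (by rw [hτE j hj.1 hjm, hτx]; omega)
          exact Fin.lt_def.mp this
      -- upper bound: everything except e 0, …, e (k+1) is unanimously below x
      have hhigh : (ρ x : ℕ) ≤ k + 1 := by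
        have hcard : ((Finset.range (k+2)).image E).card = k + 2 := by
          rw [Finset.card_image_of_injOn, Finset.card_range]
          intro a ha b hb hab
          rw [Finset.mem_coe, Finset.mem_range] at ha hb
          exact hEinj a b (by omega) (by omega) hab
        have := aux_count_above ρ x
          (Finset.univ \ ((Finset.range (k+2)).image E)) ?_
        · rw [Finset.card_sdiff_of_subset (Finset.subset_univ _), hcard,
            Finset.card_univ, Fintype.card_fin] at this
          omega
        · intro q hq
          rw [Finset.mem_sdiff] at hq
          have hqni : ∀ j, j < k + 2 → q ≠ E j := by
            intro j hj hqe
            exact hq.2 (Finset.mem_image.mpr ⟨j, Finset.mem_range.mpr hj, hqe.symm⟩)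
          have : ρ x < ρ q := by
            by_cases hqe : ∃ j : Fin m', q = e j
            · obtain ⟨j, rfl⟩ := hqe
              have hjge : k + 2 ≤ (j : ℕ) := by
                by_contra hlt
                exact hqni (j : ℕ) (by omega)
                  (by rw [hEeq (j : ℕ) j.isLt])
              have hjm := j.isLt
              apply huna
              · rw [hσx, hσ]; omega
              · rw [hτx, hτval j (by omega)]; omega
            · push_neg at hqe
              apply huna
              · rw [hσx]
                have := hσ' q hqe
                omega
              · rw [hτx]
                have := hτ' q hqe
                have hjm : k < m' := hk
                omega
          exact Fin.lt_def.mp this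
      -- ρ x ≠ k since e k already occupies position k
      have hne : (ρ x : ℕ) ≠ k := by
        intro hcontra
        have h1 : ρ x = ρ (e ⟨k, hk⟩) := by
          apply Fin.ext
          rw [hcontra]
          exact vk.symm
        have h2 := he (ρ.injective h1)
        have := congrArg Fin.val h2
        simp at this
      have hval : (ρ x : ℕ) = k + 1 := by omega
      -- finally move group (k+1) reviewers from σ to τ
      have hmove : f (fun i => if (g i : ℕ) < (k + 1) + 1 then τ else σ)
          (e ⟨k + 1, hN⟩) = ρ x := by
        rw [hρ, hx]
        apply aux_many_infl f e g hinfl ⟨k + 1, hN⟩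
        intro i hi
        simp only [hψ] at hi
        by_cases c1 : (g i : ℕ) < k + 1
        · simp [c1, show (g i : ℕ) < k + 1 + 1 by omega] at hi
        · by_cases c2 : (g i : ℕ) < k + 1 + 1
          · refine Fin.ext ?_
            show (g i : ℕ) = k + 1
            omega
          · simp [c1, c2] at hi
      rw [hmove, hval]
  intro k
  have := key (k : ℕ) k.isLt
  simpa using this
end
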